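/- arXiv:1410.3615 — 6 statements merged into one kernel-verified Lean document; each statement's English description precedes it below -/
import Mathlib

section
/- If a real A ∈ 2^ω is Δ⁰₂ (i.e., A has a recursive approximation) and A is not K-trivial, then A ∉ KT(Δ⁰₂) and A ∉ LK(Δ⁰₂). -/
/-! Common framework: prefix-free Kolmogorov complexity via a universal
prefix-free oracle machine, Δ⁰₂ functions and orders, Turing and wtt
reducibility, Ω, and the uniform measure on Cantor space. -/

/-- Finite binary strings, `2^{<ω}`. -/
abbrev BinStr := List Bool

/-- Reals, i.e. infinite binary sequences `2^ω`. -/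
abbrev Seq2 := ℕ → Bool

/-- The initial segment `A↾n` of a real `A ∈ 2^ω`. -/
def restrict (A : Seq2) (n : ℕ) : BinStr := (List.range n).map A

/-- A prefix-free oracle machine, presented as a computable enumeration of
axioms `(τ, p, y)`, meaning: on any oracle extending `τ`, the machine halts on
program `p` with output `y`.  Consistency says that for compatible oracle
strings the halting programs form a prefix-free set and outputs are unique. -/
structure PrefixOracleMachine where
  axioms : ℕ → Option (BinStr × BinStr × BinStr)
  axioms_computable : Computable axioms
  consistent : ∀ s t τ₁ p₁ y₁ τ₂ p₂ y₂,
    axioms s = some (τ₁, p₁, y₁) → axioms t = some (τ₂, p₂, y₂) →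
    (τ₁ <+: τ₂ ∨ τ₂ <+: τ₁) → p₁ <+: p₂ → p₁ = p₂ ∧ y₁ = y₂

/-- `M.Computes A p y` : with oracle `A`, machine `M` halts on program `p` with
output `y`. -/
def PrefixOracleMachine.Computes (M : PrefixOracleMachine) (A : Seq2) (p y : BinStr) : Prop :=
  ∃ s τ, M.axioms s = some (τ, p, y) ∧ ∃ n, τ = restrict A n

/-- A universal prefix-free oracle machine: it describes every string (relative
to every oracle), and it simulates every prefix-free oracle machine up to an
additive constant in the length of programs. -/
structure UniversalPrefixMachine extends PrefixOracleMachine where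
  total : ∀ (A : Seq2) (y : BinStr), ∃ p, toPrefixOracleMachine.Computes A p y
  universal : ∀ M : PrefixOracleMachine, ∃ c : ℕ, ∀ (A : Seq2) (p y : BinStr),
    M.Computes A p y →
      ∃ q, toPrefixOracleMachine.Computes A q y ∧ q.length ≤ p.length + c

/-- `K^A(y)` : prefix-free Kolmogorov complexity of `y` relative to oracle `A`. -/
noncomputable def KOr (U : UniversalPrefixMachine) (A : Seq2) (y : BinStr) : ℕ :=
  sInf {n | ∃ p : BinStr, p.length = n ∧ U.toPrefixOracleMachine.Computes A p y}

/-- The all-zeros (recursive) oracle. -/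
def zeroSeq : Seq2 := fun _ => false

/-- `K(y)` : (unrelativized) prefix-free Kolmogorov complexity. -/
noncomputable def Kc (U : UniversalPrefixMachine) (y : BinStr) : ℕ := KOr U zeroSeq y

/-- `K(n)` : the complexity of the string of `n` zeros. -/
noncomputable def KcNat (U : UniversalPrefixMachine) (n : ℕ) : ℕ :=
  Kc U (List.replicate n false)

/-- `A ∈ KT(g)` : `A` is K-trivial up to `g`. -/
def KT (U : UniversalPrefixMachine) (g : ℕ → ℕ) (A : Seq2) : Prop :=
  ∃ c : ℕ, ∀ n : ℕ, Kc U (restrict A n) ≤ KcNat U n + g n + c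

/-- `A ∈ LK(f)` : `A` is low for K up to `f`. -/
def LK (U : UniversalPrefixMachine) (f : BinStr → ℕ) (A : Seq2) : Prop :=
  ∃ c : ℕ, ∀ σ : BinStr, Kc U σ ≤ KOr U A σ + f σ + c

/-- The position of a string in the length-lexicographic ordering of `2^{<ω}`. -/
def strNum (σ : BinStr) : ℕ := σ.foldl (fun n b => 2 * n + (if b then 2 else 1)) 0

/-- A function `ℕ → ℕ` is Δ⁰₂ iff it has a recursive approximation. -/
def Delta02Fun (g : ℕ → ℕ) : Prop :=
  ∃ G : ℕ → ℕ → ℕ, Computable₂ G ∧ ∀ x, ∃ t, ∀ s ≥ t, G s x = g x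

/-- A function `2^{<ω} → ℕ` is Δ⁰₂ iff it has a recursive approximation. -/
def Delta02StrFun (f : BinStr → ℕ) : Prop :=
  ∃ F : ℕ → BinStr → ℕ, Computable₂ F ∧ ∀ σ, ∃ t, ∀ s ≥ t, F s σ = f σ

/-- A real is Δ⁰₂ iff it has a recursive approximation. -/
def Delta02Seq (A : Seq2) : Prop :=
  ∃ F : ℕ → ℕ → Bool, Computable₂ F ∧ ∀ x, ∃ t, ∀ s ≥ t, F s x = A x

/-- An order: an unbounded nondecreasing function `ℕ → ℕ`. -/
def IsOrder (g : ℕ → ℕ) : Prop := Monotone g ∧ ∀ b : ℕ, ∃ m, b < g m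

/-- An order on strings: unbounded and nondecreasing with respect to the
length-lexicographic ordering of `2^{<ω}`. -/
def IsStrOrder (f : BinStr → ℕ) : Prop :=
  (∀ σ τ : BinStr, strNum σ ≤ strNum τ → f σ ≤ f τ) ∧ ∀ b : ℕ, ∃ σ, b < f σ

/-- `A ∈ KT(Δ⁰₂)` : `A` is K-trivial up to every Δ⁰₂ order. -/
def KTDelta (U : UniversalPrefixMachine) (A : Seq2) : Prop :=
  ∀ g : ℕ → ℕ, Delta02Fun g → IsOrder g → KT U g A

/-- `A ∈ LK(Δ⁰₂)` : `A` is low for K up to every Δ⁰₂ order. -/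
def LKDelta (U : UniversalPrefixMachine) (A : Seq2) : Prop :=
  ∀ f : BinStr → ℕ, Delta02StrFun f → IsStrOrder f → LK U f A

/-- A Δ⁰₂ function is finite-to-one approximable if it has a recursive
approximation `F` such that for every `n`, for all but finitely many `m`,
`F s m > n` for all stages `s`. -/
def FinToOneApprox (f : ℕ → ℕ) : Prop :=
  ∃ F : ℕ → ℕ → ℕ, Computable₂ F ∧ (∀ x, ∃ t, ∀ s ≥ t, F s x = f x) ∧
    ∀ n : ℕ, {m : ℕ | ∃ s, F s m ≤ n}.Finite

/-- A Turing functional, presented as a computable enumeration of axioms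
`(τ, n, b)`, meaning: on any oracle extending `τ`, the output bit `n` is `b`. -/
structure TuringFunctional where
  axioms : ℕ → Option (BinStr × ℕ × Bool)
  axioms_computable : Computable axioms
  consistent : ∀ s t τ₁ n₁ b₁ τ₂ n₂ b₂,
    axioms s = some (τ₁, n₁, b₁) → axioms t = some (τ₂, n₂, b₂) →
    (τ₁ <+: τ₂ ∨ τ₂ <+: τ₁) → n₁ = n₂ → b₁ = b₂

/-- `Φ.Computes B A` : `Φ^B = A`. -/
def TuringFunctional.Computes (Φ : TuringFunctional) (B A : Seq2) : Prop :=
  ∀ n : ℕ, ∃ s k, Φ.axioms s = some (restrict B k, n, A n)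

/-- Turing reducibility `A ≤_T B`. -/
def TuringLE (A B : Seq2) : Prop := ∃ Φ : TuringFunctional, Φ.Computes B A

/-- Weak truth-table reducibility `A ≤_wtt B` : a Turing reduction whose use is
bounded by a recursive function. -/
def WttLE (A B : Seq2) : Prop :=
  ∃ (Φ : TuringFunctional) (u : ℕ → ℕ), Computable u ∧
    ∀ n : ℕ, ∃ s k, k ≤ u n ∧ Φ.axioms s = some (restrict B k, n, A n)

/-- The effective join `A ⊕ B`. -/
def join (A B : Seq2) : Seq2 := fun n => if n % 2 = 0 then A (n / 2) else B (n / 2)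

/-- `A` is Martin-Löf random: `K(A↾n) ≥ n - c` for all `n`. -/
def MLRandom (U : UniversalPrefixMachine) (A : Seq2) : Prop :=
  ∃ c : ℕ, ∀ n : ℕ, n ≤ Kc U (restrict A n) + c

/-- `A` is infinitely often K-trivial. -/
def InfOftenKTrivial (U : UniversalPrefixMachine) (A : Seq2) : Prop :=
  ∃ c : ℕ, {n : ℕ | Kc U (restrict A n) ≤ KcNat U n + c}.Infinite

/-- K-reducibility `B ≤_K A`. -/
def KLE (U : UniversalPrefixMachine) (B A : Seq2) : Prop :=
  ∃ c : ℕ, ∀ n : ℕ, Kc U (restrict B n) ≤ Kc U (restrict A n) + c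

/-- LK-reducibility `A ≤_LK B`. -/
def LKLE (U : UniversalPrefixMachine) (A B : Seq2) : Prop :=
  ∃ c : ℕ, ∀ σ : BinStr, KOr U B σ ≤ KOr U A σ + c

/-- `A` is weakly low for K: `K(σ) ≤ K^A(σ) + c` for infinitely many strings σ. -/
def WeaklyLowForK (U : UniversalPrefixMachine) (A : Seq2) : Prop :=
  ∃ c : ℕ, {σ : BinStr | Kc U σ ≤ KOr U A σ + c}.Infinite

/-- Chaitin's Ω : the measure of the domain of the universal machine. -/
noncomputable def Omega (U : UniversalPrefixMachine) : ℝ :=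
  ∑' p : {p : BinStr // ∃ y, U.toPrefixOracleMachine.Computes zeroSeq p y},
    ((2 : ℝ) ^ (p : BinStr).length)⁻¹

/-- The `n`-th binary digit of a real number `x`. -/
noncomputable def realBit (x : ℝ) (n : ℕ) : Bool :=
  decide (⌊x * 2 ^ (n + 1)⌋ % 2 = 1)

/-- `Ω↾n` : the length-`n` initial segment of the binary expansion of Ω. -/
noncomputable def omegaStr (U : UniversalPrefixMachine) (n : ℕ) : BinStr :=
  (List.range n).map (realBit (Omega U))

/-- `A` is low for Ω. -/
def LowForOmega (U : UniversalPrefixMachine) (A : Seq2) : Prop :=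
  ∀ c : ℕ, ∃ n : ℕ, KOr U A (omegaStr U n) + c < n

/-- The uniform (coin-flipping) measure on `2^ω`, obtained as the image of
Lebesgue measure on `[0,1]` under the binary-expansion map. -/
noncomputable def cantorMeasure : MeasureTheory.Measure Seq2 :=
  MeasureTheory.Measure.map (fun x : ℝ => fun n : ℕ => realBit x n)
    (MeasureTheory.volume.restrict (Set.Icc (0 : ℝ) 1))

namespace Stmt0Aux

open Encodable

lemma length_restrict (A : Seq2) (n : ℕ) : (restrict A n).length = n := by
  simp [restrict]

lemma restrict_zeroSeq (k : ℕ) : restrict zeroSeq k = List.replicate k false := by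
  have h : (List.range k).map zeroSeq = (List.range k).map (fun _ => false) := rfl
  simp [restrict, h]

/-- all-entries-false test, written with `bif` for primrec-friendliness -/
def allFalse : List Bool → Bool := fun l =>
  l.foldr (fun b r => bif b then false else r) true

@[simp] lemma allFalse_nil : allFalse [] = true := rfl

@[simp] lemma allFalse_cons (b : Bool) (t : List Bool) :
    allFalse (b :: t) = bif b then false else allFalse t := rfl

lemma allFalse_replicate (k : ℕ) : allFalse (List.replicate k false) = true := by
  induction k with
  | zero => rfl
  | succ k ih => simpa [List.replicate_succ] using ih

lemma eq_replicate_of_allFalse : ∀ {l : List Bool}, allFalse l = true →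
    l = List.replicate l.length false := by
  intro l
  induction l with
  | nil => intro; rfl
  | cons b t ih =>
    intro h
    cases b with
    | false => simpa [List.replicate_succ] using ih (by simpa using h)
    | true => simp at h

lemma primrec_allFalse : Primrec allFalse :=
  Primrec.list_foldr Primrec.id (Primrec.const true)
    ((Primrec.cond (Primrec.fst.comp Primrec.snd) (Primrec.const false)
      (Primrec.snd.comp Primrec.snd)).to₂)

end Stmt0Aux
namespace Stmt0Aux

open Encodable

lemma computable_rangeMap {β : Type} [Primcodable β] {v : ℕ → β} (hv : Computable v) :
    Computable fun n => (List.range n).map v := by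
  have h : Computable fun n : ℕ =>
      Nat.rec (motive := fun _ => List β) [] (fun m IH => IH ++ [v m]) n :=
    Computable.nat_rec Computable.id (Computable.const [])
      ((Computable.list_concat.comp (Computable.snd.comp Computable.snd)
        (hv.comp (Computable.fst.comp Computable.snd))).to₂)
  exact h.of_eq fun n => by
    induction n with
    | zero => rfl
    | succ n ih => simp [List.range_succ, ih]

lemma computable₂_rangeMap {α β : Type} [Primcodable α] [Primcodable β] {v : α → ℕ → β}
    (hv : Computable₂ v) : Computable₂ fun a n => (List.range n).map (v a) := by
  have h : Computable fun p : α × ℕ =>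
      Nat.rec (motive := fun _ => List β) [] (fun m IH => IH ++ [v p.1 m]) p.2 :=
    Computable.nat_rec Computable.snd (Computable.const [])
      ((Computable.list_concat.comp (Computable.snd.comp Computable.snd)
        (hv.comp (Computable.fst.comp Computable.fst)
          (Computable.fst.comp Computable.snd))).to₂)
  have : Computable fun p : α × ℕ => (List.range p.2).map (v p.1) := by
    refine h.of_eq fun p => ?_
    obtain ⟨a, n⟩ := p
    induction n with
    | zero => rfl
    | succ n ih => simp_all [List.range_succ]
  exact this

abbrev Trip := BinStr × BinStr × BinStr

/-- the list of the first `s` axioms of `U` -/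
def axList (U : UniversalPrefixMachine) (s : ℕ) : List (Option Trip) :=
  (List.range s).map U.toPrefixOracleMachine.axioms

lemma computable_axList (U : UniversalPrefixMachine) : Computable (axList U) :=
  computable_rangeMap U.toPrefixOracleMachine.axioms_computable

/-- candidate description length of `y` (oracle-free) from one axiom -/
def cand (y : BinStr) (o : Option Trip) : Option ℕ :=
  o.bind fun t => bif allFalse t.1 then
    (bif decide (t.2.2 = y) then some t.2.1.length else none) else none

lemma primrec₂_cand : Primrec₂ cand := by
  have hc : Primrec fun q : (BinStr × Option Trip) × Trip =>
      (bif allFalse q.2.1 then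
        (bif decide (q.2.2.2 = q.1.1) then some q.2.2.1.length else none) else none) :=
    Primrec.cond (primrec_allFalse.comp (Primrec.fst.comp Primrec.snd))
      (Primrec.cond (Primrec.eq.comp (Primrec.snd.comp (Primrec.snd.comp Primrec.snd))
          (Primrec.fst.comp Primrec.fst)).decide
        (Primrec.option_some.comp
          (Primrec.list_length.comp (Primrec.fst.comp (Primrec.snd.comp Primrec.snd))))
        (Primrec.const none))
      (Primrec.const none)
  have hin : Primrec₂ fun (q : BinStr × Option Trip) (t : Trip) =>
      (bif allFalse t.1 then
        (bif decide (t.2.2 = q.1) then some t.2.1.length else none) else none) := hc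
  exact Primrec.option_bind Primrec.snd hin

/-- stage-`s` approximation of `Kc U y` -/
def Kapp (U : UniversalPrefixMachine) (s : ℕ) (y : BinStr) : ℕ :=
  ((axList U s).filterMap (cand y)).foldr min s

lemma computable₂_Kapp (U : UniversalPrefixMachine) : Computable₂ (Kapp U) := by
  have h1 : Computable fun p : ℕ × BinStr => (axList U p.1, p) :=
    ((computable_axList U).comp Computable.fst).pair Computable.id
  have h2 : Primrec fun q : List (Option Trip) × (ℕ × BinStr) =>
      (q.1.filterMap (cand q.2.2)).foldr min q.2.1 := by
    have hg : Primrec₂ fun (q : List (Option Trip) × (ℕ × BinStr)) (o : Option Trip) =>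
        cand q.2.2 o :=
      primrec₂_cand.comp (Primrec.snd.comp (Primrec.snd.comp Primrec.fst)) Primrec.snd
    have hfm : Primrec fun q : List (Option Trip) × (ℕ × BinStr) =>
        q.1.filterMap (cand q.2.2) :=
      Primrec.listFilterMap Primrec.fst hg
    have hmin : Primrec₂ fun (_ : List (Option Trip) × (ℕ × BinStr)) (p : ℕ × ℕ) =>
        min p.1 p.2 :=
      Primrec.nat_min.comp (Primrec.fst.comp Primrec.snd) (Primrec.snd.comp Primrec.snd)
    exact Primrec.list_foldr hfm (Primrec.fst.comp Primrec.snd) hmin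
  exact Computable.to₂ ((h2.to_comp.comp h1).of_eq fun p => rfl)

end Stmt0Aux
namespace Stmt0Aux

open Encodable

lemma Kc_le (U : UniversalPrefixMachine) {p y : BinStr}
    (h : U.toPrefixOracleMachine.Computes zeroSeq p y) : Kc U y ≤ p.length :=
  Nat.sInf_le ⟨p, rfl, h⟩

lemma KOr_le (U : UniversalPrefixMachine) (A : Seq2) {p y : BinStr}
    (h : U.toPrefixOracleMachine.Computes A p y) : KOr U A y ≤ p.length :=
  Nat.sInf_le ⟨p, rfl, h⟩

lemma exists_min_prog (U : UniversalPrefixMachine) (y : BinStr) :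
    ∃ p : BinStr, p.length = Kc U y ∧ U.toPrefixOracleMachine.Computes zeroSeq p y := by
  obtain ⟨p, hp⟩ := U.total zeroSeq y
  have hne : {n | ∃ p : BinStr, p.length = n ∧
      U.toPrefixOracleMachine.Computes zeroSeq p y}.Nonempty := ⟨p.length, p, rfl, hp⟩
  exact Nat.sInf_mem hne

lemma computes_of_axiom (U : UniversalPrefixMachine) {i : ℕ} {τ p y : BinStr}
    (h : U.toPrefixOracleMachine.axioms i = some (τ, p, y)) (hτ : allFalse τ = true) :
    U.toPrefixOracleMachine.Computes zeroSeq p y :=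
  ⟨i, τ, h, τ.length, by rw [restrict_zeroSeq]; exact eq_replicate_of_allFalse hτ⟩

lemma foldr_min_le {l : List ℕ} {a x : ℕ} (hx : x ∈ l) : l.foldr min a ≤ x := by
  induction l with
  | nil => simp at hx
  | cons b t ih =>
    rcases List.mem_cons.1 hx with rfl | hx
    · exact min_le_left _ _
    · exact le_trans (min_le_right _ _) (ih hx)

lemma le_foldr_min {l : List ℕ} {a b : ℕ} (ha : b ≤ a) (h : ∀ x ∈ l, b ≤ x) :
    b ≤ l.foldr min a := by
  induction l with
  | nil => exact ha
  | cons c t ih =>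
    exact le_min (h c (by simp)) (ih fun x hx => h x (List.mem_cons_of_mem _ hx))

lemma Kapp_converges (U : UniversalPrefixMachine) (y : BinStr) :
    ∃ t, ∀ s ≥ t, Kapp U s y = Kc U y := by
  obtain ⟨p, hlen, hp⟩ := exists_min_prog U y
  obtain ⟨s0, τ, hax, k, hτ⟩ := hp
  refine ⟨max (s0 + 1) (Kc U y), fun s hs => ?_⟩
  have hs0 : s0 < s := lt_of_lt_of_le (Nat.lt_succ_self s0) (le_trans (le_max_left _ _) hs)
  have hsK : Kc U y ≤ s := le_trans (le_max_right _ _) hs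
  have hτ' : allFalse τ = true := by rw [hτ, restrict_zeroSeq]; exact allFalse_replicate k
  apply le_antisymm
  · -- the witness appears in the list
    apply foldr_min_le
    rw [← hlen]
    apply List.mem_filterMap.2
    refine ⟨some (τ, p, y), ?_, ?_⟩
    · exact List.mem_map.2 ⟨s0, List.mem_range.2 hs0, hax⟩
    · simp [cand, hτ']
  · -- every candidate has length ≥ Kc U y
    apply le_foldr_min hsK
    intro x hx
    obtain ⟨o, hmem, ho⟩ := List.mem_filterMap.1 hx
    obtain ⟨i, _, hio⟩ := List.mem_map.1 hmem
    obtain ⟨t, rfl⟩ : ∃ t : Trip, o = some t := by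
      cases o with
      | none => simp [cand] at ho
      | some t => exact ⟨t, rfl⟩
    obtain ⟨τ', p', y'⟩ := t
    by_cases h1 : allFalse τ' = true
    · by_cases h2 : y' = y
      · subst h2
        simp [cand, h1] at ho
        subst ho
        exact Kc_le U (computes_of_axiom U hio h1)
      · simp [cand, h1, h2] at ho
    · simp [cand, Bool.eq_false_iff.2 h1] at ho
  
end Stmt0Aux
namespace Stmt0Aux

/-- stage-`s` approximation of `restrict A n` -/
def Astr (F : ℕ → ℕ → Bool) (s n : ℕ) : BinStr := (List.range n).map (F s)

lemma computable₂_Astr {F : ℕ → ℕ → Bool} (hF : Computable₂ F) :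
    Computable₂ (Astr F) := computable₂_rangeMap hF

lemma Astr_converges {F : ℕ → ℕ → Bool} {A : Seq2}
    (hFA : ∀ x, ∃ t, ∀ s ≥ t, F s x = A x) (n : ℕ) :
    ∃ t, ∀ s ≥ t, Astr F s n = restrict A n := by
  choose t ht using hFA
  refine ⟨(Finset.range n).sup t, fun s hs => ?_⟩
  apply List.map_congr_left
  intro x hx
  have hxn : x < n := List.mem_range.1 hx
  exact ht x s (le_trans (Finset.le_sup (Finset.mem_range.2 hxn)) hs)

/-- `d n = K(A↾n) - K(n)` (truncated) -/
noncomputable def dfun (U : UniversalPrefixMachine) (A : Seq2) (n : ℕ) : ℕ :=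
  Kc U (restrict A n) - KcNat U n

/-- stage approximation of `dfun` -/
def dd (U : UniversalPrefixMachine) (F : ℕ → ℕ → Bool) (s m : ℕ) : ℕ :=
  Kapp U s (Astr F s m) - Kapp U s (List.replicate m false)

lemma primrec_replicate_false : Primrec fun m => List.replicate m false := by
  have h : Primrec fun m => (List.range m).map (fun _ : ℕ => false) :=
    Primrec.list_map Primrec.list_range ((Primrec.const false).comp Primrec.fst).to₂
  exact h.of_eq fun m => by simp

lemma computable₂_dd (U : UniversalPrefixMachine) {F : ℕ → ℕ → Bool} (hF : Computable₂ F) :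
    Computable₂ (dd U F) := by
  have h1 : Computable fun p : ℕ × ℕ => Kapp U p.1 (Astr F p.1 p.2) :=
    (computable₂_Kapp U).comp Computable.fst
      ((computable₂_Astr hF).comp Computable.fst Computable.snd)
  have h2 : Computable fun p : ℕ × ℕ => Kapp U p.1 (List.replicate p.2 false) :=
    (computable₂_Kapp U).comp Computable.fst
      (primrec_replicate_false.to_comp.comp Computable.snd)
  exact Primrec.nat_sub.to_comp.comp h1 h2

lemma dd_converges (U : UniversalPrefixMachine) {F : ℕ → ℕ → Bool} {A : Seq2}
    (hFA : ∀ x, ∃ t, ∀ s ≥ t, F s x = A x) (m : ℕ) :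
    ∃ t, ∀ s ≥ t, dd U F s m = dfun U A m := by
  obtain ⟨t1, h1⟩ := Astr_converges hFA m
  obtain ⟨t2, h2⟩ := Kapp_converges U (restrict A m)
  obtain ⟨t3, h3⟩ := Kapp_converges U (List.replicate m false)
  refine ⟨max t1 (max t2 t3), fun s hs => ?_⟩
  have hs1 := le_trans (le_max_left _ _) hs
  have hs2 := le_trans (le_trans (le_max_left _ _) (le_max_right t1 _)) hs
  have hs3 := le_trans (le_trans (le_max_right t2 _) (le_max_right t1 _)) hs
  unfold dd dfun KcNat
  rw [h1 s hs1, h2 s hs2, h3 s hs3]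

/-- running maximum of `dfun` -/
noncomputable def gD (U : UniversalPrefixMachine) (A : Seq2) (n : ℕ) : ℕ :=
  Nat.rec (dfun U A 0) (fun m ih => max ih (dfun U A (m + 1))) n

/-- stage approximation of `gD` -/
def DD (U : UniversalPrefixMachine) (F : ℕ → ℕ → Bool) (s n : ℕ) : ℕ :=
  Nat.rec (dd U F s 0) (fun m ih => max ih (dd U F s (m + 1))) n

lemma computable₂_DD (U : UniversalPrefixMachine) {F : ℕ → ℕ → Bool} (hF : Computable₂ F) :
    Computable₂ (DD U F) := by
  have hdd := computable₂_dd U hF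
  have h := Computable.nat_rec (f := fun p : ℕ × ℕ => p.2)
      (g := fun p : ℕ × ℕ => dd U F p.1 0)
      (h := fun (p : ℕ × ℕ) (q : ℕ × ℕ) => max q.2 (dd U F p.1 (q.1 + 1)))
      Computable.snd
      (hdd.comp Computable.fst (Computable.const 0))
      ((Primrec.nat_max.to_comp.comp (Computable.snd.comp Computable.snd)
        (hdd.comp (Computable.fst.comp Computable.fst)
          (Computable.succ.comp (Computable.fst.comp Computable.snd)))).to₂)
  exact (h.of_eq fun p => rfl : Computable fun p : ℕ × ℕ => DD U F p.1 p.2)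

lemma DD_converges (U : UniversalPrefixMachine) {F : ℕ → ℕ → Bool} {A : Seq2}
    (hFA : ∀ x, ∃ t, ∀ s ≥ t, F s x = A x) (n : ℕ) :
    ∃ t, ∀ s ≥ t, DD U F s n = gD U A n := by
  induction n with
  | zero =>
    obtain ⟨t, ht⟩ := dd_converges U hFA 0
    exact ⟨t, fun s hs => ht s hs⟩
  | succ n ih =>
    obtain ⟨t1, h1⟩ := ih
    obtain ⟨t2, h2⟩ := dd_converges U hFA (n + 1)
    refine ⟨max t1 t2, fun s hs => ?_⟩
    show max (DD U F s n) (dd U F s (n + 1)) = max (gD U A n) (dfun U A (n + 1))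
    rw [h1 s (le_trans (le_max_left _ _) hs), h2 s (le_trans (le_max_right _ _) hs)]

lemma le_gD (U : UniversalPrefixMachine) (A : Seq2) {m n : ℕ} (h : m ≤ n) :
    dfun U A m ≤ gD U A n := by
  induction n with
  | zero => rw [Nat.le_zero.1 h]; exact le_rfl
  | succ n ih =>
    rcases Nat.lt_or_ge m (n + 1) with hlt | hge
    · exact le_trans (ih (Nat.lt_succ_iff.1 hlt)) (le_max_left _ _)
    · rw [le_antisymm h hge]; exact le_max_right _ _

lemma gD_le (U : UniversalPrefixMachine) (A : Seq2) {n K : ℕ}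
    (h : ∀ m ≤ n, dfun U A m ≤ K) : gD U A n ≤ K := by
  induction n with
  | zero => exact h 0 le_rfl
  | succ n ih =>
    exact max_le (ih fun m hm => h m (le_trans hm (Nat.le_succ n))) (h (n + 1) le_rfl)

lemma gD_mono (U : UniversalPrefixMachine) (A : Seq2) : Monotone (gD U A) :=
  monotone_nat_of_le_succ fun n => le_max_left _ _

end Stmt0Aux
namespace Stmt0Aux

/-- the Δ⁰₂ order defeating `KT` -/
noncomputable def gfun (U : UniversalPrefixMachine) (A : Seq2) (n : ℕ) : ℕ :=
  gD U A n / 2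

def Gapp (U : UniversalPrefixMachine) (F : ℕ → ℕ → Bool) (s n : ℕ) : ℕ :=
  DD U F s n / 2

lemma delta02_gfun (U : UniversalPrefixMachine) {F : ℕ → ℕ → Bool} {A : Seq2}
    (hF : Computable₂ F) (hFA : ∀ x, ∃ t, ∀ s ≥ t, F s x = A x) :
    Delta02Fun (gfun U A) := by
  refine ⟨Gapp U F, ?_, ?_⟩
  · exact Primrec.nat_div.to_comp.comp
      ((computable₂_DD U hF).comp Computable.fst Computable.snd)
      (Computable.const 2)
  · intro n
    obtain ⟨t, ht⟩ := DD_converges U hFA n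
    exact ⟨t, fun s hs => by unfold Gapp gfun; rw [ht s hs]⟩

lemma isOrder_gfun (U : UniversalPrefixMachine) (A : Seq2)
    (hcrit : ∀ c, ∃ n, KcNat U n + c < Kc U (restrict A n)) :
    IsOrder (gfun U A) := by
  constructor
  · intro m n hmn
    exact Nat.div_le_div_right (gD_mono U A hmn)
  · intro b
    obtain ⟨n, hn⟩ := hcrit (2 * b + 1)
    have hd : 2 * b + 2 ≤ dfun U A n := by unfold dfun; omega
    have hg : dfun U A n ≤ gD U A n := le_gD U A le_rfl
    exact ⟨n, by unfold gfun; omega⟩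

lemma not_KT_gfun (U : UniversalPrefixMachine) (A : Seq2)
    (hcrit : ∀ c, ∃ n, KcNat U n + c < Kc U (restrict A n)) :
    ¬ KT U (gfun U A) A := by
  rintro ⟨c, hc⟩
  have hP : ∃ n, KcNat U n + (2 * c + 1) < Kc U (restrict A n) := hcrit (2 * c + 1)
  classical
  set n := Nat.find hP with hn
  have h1 : KcNat U n + (2 * c + 1) < Kc U (restrict A n) := Nat.find_spec hP
  have hdn : 2 * c + 2 ≤ dfun U A n := by unfold dfun; omega
  have hgDn : gD U A n = dfun U A n := by
    refine le_antisymm (gD_le U A fun m hm => ?_) (le_gD U A le_rfl)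
    rcases Nat.lt_or_ge m n with hlt | hge
    · have h2 := Nat.find_min hP hlt
      unfold dfun
      omega
    · rw [le_antisymm hm hge]
  have h3 := hc n
  have h4 : gfun U A n = dfun U A n / 2 := by rw [gfun, hgDn]
  unfold dfun at hdn h4
  omega

end Stmt0Aux
namespace Stmt0Aux

open Encodable

/-- axioms of the machine which, given a `U`-program for `n` zeros (no oracle),
outputs the first `n` bits of its oracle -/
def MaxFun (U : UniversalPrefixMachine) (e : ℕ) : Option Trip :=
  (U.toPrefixOracleMachine.axioms e.unpair.1).bind fun t =>
    bif allFalse t.1 then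
      (bif allFalse t.2.2 then
        ((Encodable.decode e.unpair.2 : Option BinStr).bind fun σ =>
          bif decide (σ.length = t.2.2.length) then some (σ, t.2.1, σ) else none)
      else none)
    else none

lemma computable_MaxFun (U : UniversalPrefixMachine) : Computable (MaxFun U) := by
  have h1 : Computable fun e : ℕ =>
      ((U.toPrefixOracleMachine.axioms e.unpair.1), e.unpair.2) :=
    (U.toPrefixOracleMachine.axioms_computable.comp
      (Primrec.fst.comp Primrec.unpair).to_comp).pair
      (Primrec.snd.comp Primrec.unpair).to_comp
  have hin : Primrec₂ fun (q : Option Trip × ℕ) (t : Trip) =>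
      (bif allFalse t.1 then
        (bif allFalse t.2.2 then
          ((Encodable.decode q.2 : Option BinStr).bind fun σ =>
            bif decide (σ.length = t.2.2.length) then some (σ, t.2.1, σ) else none)
        else none)
      else none) := by
    have hd : Primrec fun q : (Option Trip × ℕ) × Trip =>
        (Encodable.decode q.1.2 : Option BinStr) :=
      Primrec.decode.comp (Primrec.snd.comp Primrec.fst)
    have hinner : Primrec₂ fun (q : (Option Trip × ℕ) × Trip) (σ : BinStr) =>
        (bif decide (σ.length = q.2.2.2.length) then some (σ, q.2.2.1, σ) else none) :=
      Primrec.cond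
        (Primrec.eq.comp (Primrec.list_length.comp Primrec.snd)
          (Primrec.list_length.comp
            (Primrec.snd.comp (Primrec.snd.comp (Primrec.snd.comp Primrec.fst))))).decide
        (Primrec.option_some.comp (Primrec.snd.pair
          ((Primrec.fst.comp (Primrec.snd.comp (Primrec.snd.comp Primrec.fst))).pair
            Primrec.snd)))
        (Primrec.const none)
    exact Primrec.cond (primrec_allFalse.comp (Primrec.fst.comp Primrec.snd))
      (Primrec.cond
        (primrec_allFalse.comp (Primrec.snd.comp (Primrec.snd.comp Primrec.snd)))
        (Primrec.option_bind hd hinner)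
        (Primrec.const none))
      (Primrec.const none)
  exact (Primrec.option_bind Primrec.fst hin).to_comp.comp h1

lemma MaxFun_inv (U : UniversalPrefixMachine) {e : ℕ} {τ p y : BinStr}
    (h : MaxFun U e = some (τ, p, y)) :
    y = τ ∧ ∃ ρ ζ : BinStr, U.toPrefixOracleMachine.axioms e.unpair.1 = some (ρ, p, ζ) ∧
      allFalse ρ = true ∧ allFalse ζ = true ∧ τ.length = ζ.length := by
  unfold MaxFun at h
  cases hax : U.toPrefixOracleMachine.axioms e.unpair.1 with
  | none => rw [hax] at h; simp at h
  | some t =>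
    rw [hax] at h
    obtain ⟨ρ, p', ζ⟩ := t
    simp only [Option.bind_some] at h
    cases h1 : allFalse ρ with
    | false => rw [h1] at h; simp at h
    | true =>
      rw [h1] at h
      cases h2 : allFalse ζ with
      | false => rw [h2] at h; simp at h
      | true =>
        rw [h2] at h
        simp only [cond_true] at h
        cases hdec : (Encodable.decode e.unpair.2 : Option BinStr) with
        | none => rw [hdec] at h; simp at h
        | some σ =>
          rw [hdec] at h
          simp only [Option.bind_some] at h
          cases h3 : decide (σ.length = ζ.length) with
          | false => rw [h3] at h; simp at h
          | true =>
            rw [h3] at h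
            simp only [cond_true, Option.some.injEq] at h
            obtain ⟨rfl, rfl, rfl⟩ := h
            exact ⟨rfl, ρ, ζ, rfl, h1, h2, of_decide_eq_true h3⟩

lemma replicate_prefix {k l : ℕ} (h : k ≤ l) :
    List.replicate k false <+: List.replicate l false :=
  ⟨List.replicate (l - k) false, by rw [← List.replicate_add]; congr 1; omega⟩

/-- the machine `M` as a `PrefixOracleMachine` -/
def Mmac (U : UniversalPrefixMachine) : PrefixOracleMachine where
  axioms := MaxFun U
  axioms_computable := computable_MaxFun U
  consistent := by
    intro s t τ₁ p₁ y₁ τ₂ p₂ y₂ h1 h2 hcomp hpre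
    obtain ⟨hy1, ρ₁, ζ₁, hax1, hρ1, hζ1, hlen1⟩ := MaxFun_inv U h1
    obtain ⟨hy2, ρ₂, ζ₂, hax2, hρ2, hζ2, hlen2⟩ := MaxFun_inv U h2
    have hρcomp : ρ₁ <+: ρ₂ ∨ ρ₂ <+: ρ₁ := by
      rw [eq_replicate_of_allFalse hρ1, eq_replicate_of_allFalse hρ2]
      rcases Nat.le_or_le ρ₁.length ρ₂.length with h | h
      · exact Or.inl (replicate_prefix h)
      · exact Or.inr (replicate_prefix h)
    obtain ⟨hp, hζ⟩ := U.toPrefixOracleMachine.consistent _ _ _ _ _ _ _ _ hax1 hax2 hρcomp hpre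
    have hτlen : τ₁.length = τ₂.length := by rw [hlen1, hlen2, hζ]
    have hτ : τ₁ = τ₂ := by
      rcases hcomp with h | h
      · exact List.IsPrefix.eq_of_length h hτlen
      · exact (List.IsPrefix.eq_of_length h hτlen.symm).symm
    exact ⟨hp, by rw [hy1, hy2, hτ]⟩

lemma Mmac_computes (U : UniversalPrefixMachine) (A : Seq2) {p : BinStr} {n : ℕ}
    (h : U.toPrefixOracleMachine.Computes zeroSeq p (List.replicate n false)) :
    (Mmac U).Computes A p (restrict A n) := by
  obtain ⟨s0, τ, hax, k, hτ⟩ := h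
  have hτ' : τ = List.replicate k false := by rw [hτ, restrict_zeroSeq]
  refine ⟨Nat.pair s0 (Encodable.encode (restrict A n)), restrict A n, ?_, n, rfl⟩
  show MaxFun U _ = _
  unfold MaxFun
  rw [Nat.unpair_pair]
  simp [hax, hτ', allFalse_replicate, Encodable.encodek, length_restrict]

lemma oracle_bound (U : UniversalPrefixMachine) (A : Seq2) :
    ∃ cA : ℕ, ∀ n : ℕ, KOr U A (restrict A n) ≤ KcNat U n + cA := by
  obtain ⟨c, hc⟩ := U.universal (Mmac U)
  refine ⟨c, fun n => ?_⟩
  obtain ⟨p, hlen, hp⟩ := exists_min_prog U (List.replicate n false)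
  obtain ⟨q, hq, hqlen⟩ := hc A p (restrict A n) (Mmac_computes U A hp)
  have h1 : KOr U A (restrict A n) ≤ q.length := KOr_le U A hq
  have h2 : KcNat U n = p.length := hlen.symm
  omega

end Stmt0Aux
namespace Stmt0Aux

lemma strNum_bounds : ∀ (σ : BinStr) (n : ℕ),
    n * 2 ^ σ.length + 2 ^ σ.length ≤
      σ.foldl (fun n b => 2 * n + (if b then 2 else 1)) n + 1 ∧
    σ.foldl (fun n b => 2 * n + (if b then 2 else 1)) n + 2 ≤
      n * 2 ^ σ.length + 2 ^ (σ.length + 1) := by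
  intro σ
  induction σ with
  | nil => intro n; simp
  | cons b σ ih =>
    intro n
    cases b with
    | false =>
      have h := ih (2 * n + 1)
      simp only [List.foldl_cons, List.length_cons, pow_succ] at h ⊢
      norm_num at h ⊢
      have e1 : (2 * n + 1) * 2 ^ σ.length = 2 * (n * 2 ^ σ.length) + 2 ^ σ.length := by ring
      have e2 : n * (2 ^ σ.length * 2) = 2 * (n * 2 ^ σ.length) := by ring
      omega
    | true =>
      have h := ih (2 * n + 2)
      simp only [List.foldl_cons, List.length_cons, pow_succ] at h ⊢
      norm_num at h ⊢
      have e1 : (2 * n + 2) * 2 ^ σ.length = 2 * (n * 2 ^ σ.length) + 2 * 2 ^ σ.length := by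
        ring
      have e2 : n * (2 ^ σ.length * 2) = 2 * (n * 2 ^ σ.length) := by ring
      omega

lemma strNum_length_mono {σ τ : BinStr} (h : strNum σ ≤ strNum τ) :
    σ.length ≤ τ.length := by
  by_contra hc
  push_neg at hc
  have h1 := (strNum_bounds σ 0).1
  have h2 := (strNum_bounds τ 0).2
  have h3 : 2 ^ (τ.length + 1) ≤ 2 ^ σ.length := Nat.pow_le_pow_right (by norm_num) hc
  unfold strNum at h
  simp only [zero_mul, zero_add] at h1 h2
  omega

end Stmt0Aux
/-- if a real A is Δ⁰₂ and not K-trivial, then A ∉ KT(Δ⁰₂) and A ∉ LK(Δ⁰₂). -/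
theorem stmt0 (U : UniversalPrefixMachine) (A : Seq2)
    (hA : Delta02Seq A) (hnt : ¬ KT U (fun _ => 0) A) :
    ¬ KTDelta U A ∧ ¬ LKDelta U A := by
  classical
  obtain ⟨F, hF, hFA⟩ := hA
  have hcrit : ∀ c, ∃ n, KcNat U n + c < Kc U (restrict A n) := by
    intro c
    by_contra h
    push_neg at h
    exact hnt ⟨c, fun n => by have := h n; omega⟩
  have hd := Stmt0Aux.delta02_gfun U hF hFA
  have ho := Stmt0Aux.isOrder_gfun U A hcrit
  have hnKT := Stmt0Aux.not_KT_gfun U A hcrit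
  constructor
  · intro hKTD
    exact hnKT (hKTD _ hd ho)
  · intro hLKD
    obtain ⟨cA, hcA⟩ := Stmt0Aux.oracle_bound U A
    set f : BinStr → ℕ := fun σ => Stmt0Aux.gfun U A σ.length with hf
    have hdf : Delta02StrFun f := by
      obtain ⟨G, hG, hGc⟩ := hd
      refine ⟨fun s σ => G s σ.length, ?_, ?_⟩
      · exact hG.comp Computable.fst (Computable.list_length.comp Computable.snd)
      · intro σ
        obtain ⟨t, ht⟩ := hGc σ.length
        exact ⟨t, fun s hs => ht s hs⟩
    have hso : IsStrOrder f := by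
      constructor
      · intro σ τ h
        exact ho.1 (Stmt0Aux.strNum_length_mono h)
      · intro b
        obtain ⟨m, hm⟩ := ho.2 b
        exact ⟨List.replicate m false, by simpa [hf] using hm⟩
    obtain ⟨c₁, hc₁⟩ := hLKD f hdf hso
    apply hnKT
    refine ⟨cA + c₁, fun n => ?_⟩
    have h1 := hc₁ (restrict A n)
    have h2 := hcA n
    have h3 : f (restrict A n) = Stmt0Aux.gfun U A n := by
      rw [hf]; simp [Stmt0Aux.length_restrict]
    rw [h3] at h1
    omega
end

section
/- Every Δ⁰₂ order g : ℕ → ℕ is finite-to-one approximable. -/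
def monoCheck (G : ℕ → ℕ → ℕ) (s m : ℕ) : Bool :=
  Nat.rec true (fun k ih => ih && decide (G s k ≤ G s (k+1))) m

lemma monoCheck_of_mono {G : ℕ → ℕ → ℕ} {s m : ℕ}
    (h : ∀ k < m, G s k ≤ G s (k+1)) : monoCheck G s m = true := by
  induction m with
  | zero => rfl
  | succ m ih =>
    show (monoCheck G s m && decide (G s m ≤ G s (m+1))) = true
    simp only [Bool.and_eq_true, decide_eq_true_eq]
    exact ⟨ih fun k hk => h k (hk.trans (Nat.lt_succ_self m)), h m (Nat.lt_succ_self m)⟩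

lemma monoCheck_le {G : ℕ → ℕ → ℕ} {s m : ℕ}
    (h : monoCheck G s m = true) : ∀ j ≤ m, G s j ≤ G s m := by
  induction m with
  | zero =>
    intro j hj
    obtain rfl : j = 0 := Nat.le_zero.mp hj
    exact le_rfl
  | succ m ih =>
    have h' : (monoCheck G s m && decide (G s m ≤ G s (m+1))) = true := h
    simp only [Bool.and_eq_true, decide_eq_true_eq] at h'
    intro j hj
    rcases Nat.eq_or_lt_of_le hj with rfl | hlt
    · exact le_rfl
    · exact (ih h'.1 j (Nat.lt_succ_iff.mp hlt)).trans h'.2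

/-- every Δ⁰₂ order is finite-to-one approximable. -/
theorem stmt1 (g : ℕ → ℕ) (hg : Delta02Fun g) (hord : IsOrder g) :
    FinToOneApprox g := by
  obtain ⟨G, hGc, hGlim⟩ := hg
  classical
  -- settling times
  choose T hT using hGlim
  refine ⟨fun s m => cond (decide (m ≤ s) && monoCheck G s m) (G s m) (max (G s m) m),
    ?_, ?_, ?_⟩
  · -- computability
    have hR : Computable fun p : ℕ × ℕ => monoCheck G p.1 p.2 := by
      have hh : Computable₂ fun (a : ℕ × ℕ) (q : ℕ × Bool) =>
          q.2 && decide (G a.1 q.1 ≤ G a.1 (q.1+1)) :=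
        Primrec.and.to_comp.comp₂
          ((Computable.snd.comp Computable.snd).to₂)
          ((Primrec.nat_le.decide.to_comp.comp
            (hGc.comp (Computable.fst.comp Computable.fst)
              (Computable.fst.comp Computable.snd))
            (hGc.comp (Computable.fst.comp Computable.fst)
              (Computable.succ.comp (Computable.fst.comp Computable.snd)))).to₂)
      exact Computable.nat_rec Computable.snd (Computable.const true) hh
    have hc : Computable fun p : ℕ × ℕ =>
        decide (p.2 ≤ p.1) && monoCheck G p.1 p.2 :=
      Primrec.and.to_comp.comp
        (Primrec.nat_le.decide.to_comp.comp Computable.snd Computable.fst) hR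
    exact Computable.cond hc (hGc.comp Computable.fst Computable.snd)
      (Primrec.nat_max.to_comp.comp
        (hGc.comp Computable.fst Computable.snd) Computable.snd)
  · -- limit
    intro m
    refine ⟨max m ((Finset.range (m+1)).sup T), fun s hs => ?_⟩
    have hsettle : ∀ k ≤ m, G s k = g k := by
      intro k hk
      refine hT k s (le_trans ?_ (le_trans (le_max_right _ _) hs))
      exact Finset.le_sup (Finset.mem_range.mpr (Nat.lt_succ_of_le hk))
    have hms : m ≤ s := le_trans (le_max_left _ _) hs
    have hmc : monoCheck G s m = true := by
      refine monoCheck_of_mono fun k hk => ?_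
      rw [hsettle k hk.le, hsettle (k+1) hk]
      exact hord.1 (Nat.le_succ k)
    simp [hms, hmc, hsettle m le_rfl]
  · -- finite-to-one
    intro n
    obtain ⟨N, hN⟩ := hord.2 n
    refine Set.Finite.subset (Set.finite_Iic (max (max n N) (T N))) ?_
    rintro m ⟨s, hsm⟩
    simp only [Set.mem_Iic]
    rcases hb : (decide (m ≤ s) && monoCheck G s m) with _ | _
    · simp only [hb, cond_false] at hsm
      exact le_trans (le_trans (le_max_right _ _) hsm)
        (le_trans (le_max_left _ _) (le_max_left _ _))
    · simp only [hb, cond_true] at hsm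
      simp only [Bool.and_eq_true, decide_eq_true_eq] at hb
      by_cases hNm : N ≤ m
      · have h1 : G s N ≤ n := le_trans (monoCheck_le hb.2 N hNm) hsm
        have h2 : s < T N := by
          by_contra h
          rw [hT N s (le_of_not_gt h)] at h1
          omega
        exact le_trans (le_trans hb.1 h2.le) (le_max_right _ _)
      · exact le_trans (le_of_not_ge hNm)
          (le_trans (le_max_right _ _) (le_max_left _ _))
end

section
/- Every finite-to-one approximable function f : ℕ → ℕ pointwise dominates some Δ⁰₂ order, i.e., there is a Δ⁰₂ order h : ℕ → ℕ with h(n) ≤ f(n) for all n. -/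
-- auxiliary
def GG (F : ℕ → ℕ → ℕ) (s n k : ℕ) : ℕ :=
  Nat.rec (F s n) (fun j IH => min IH (F s (n + j + 1))) k

lemma GG_le (F : ℕ → ℕ → ℕ) (s n k : ℕ) : ∀ i ≤ k, GG F s n k ≤ F s (n + i) := by
  induction k with
  | zero => intro i hi; interval_cases i; simp [GG]
  | succ k ih =>
    intro i hi
    rcases Nat.lt_succ_iff_lt_or_eq.mp (Nat.lt_succ_of_le hi) with h | h
    · exact le_trans (min_le_left _ _) (ih i (Nat.lt_succ_iff.mp h))
    · subst h; exact min_le_right _ _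

lemma GG_mem (F : ℕ → ℕ → ℕ) (s n k : ℕ) : ∃ i ≤ k, GG F s n k = F s (n + i) := by
  induction k with
  | zero => exact ⟨0, le_refl _, rfl⟩
  | succ k ih =>
    rcases ih with ⟨i, hi, hGG⟩
    rcases le_or_gt (GG F s n k) (F s (n + k + 1)) with h1 | h1
    · exact ⟨i, le_trans hi (Nat.le_succ _), by
        show min (GG F s n k) (F s (n + k + 1)) = _; rw [min_eq_left h1, hGG]⟩
    · refine ⟨k + 1, le_refl _, ?_⟩
      show min (GG F s n k) (F s (n + k + 1)) = _
      rw [min_eq_right h1.le]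
      ring_nf

lemma GG_computable {F : ℕ → ℕ → ℕ} (hF : Computable₂ F) :
    Computable₂ (fun s n => GG F s n s) := by
  have := Computable.nat_rec (α := ℕ × ℕ) (σ := ℕ)
    (f := Prod.fst) (g := fun a => F a.1 a.2)
    (h := fun a p => min p.2 (F a.1 (a.2 + p.1 + 1)))
    Computable.fst (hF.comp Computable.fst Computable.snd)
    (Computable₂.comp₂ Primrec.nat_min.to_comp.to₂
      (Computable.snd.comp Computable.snd)
      (hF.comp₂ (Computable.fst.comp Computable.fst)
        (Computable.succ.comp
          (Primrec.nat_add.to_comp.to₂.comp (Computable.snd.comp Computable.fst)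
            (Computable.fst.comp Computable.snd)))))
  exact this.to₂

theorem stmt2' (f : ℕ → ℕ)
    (hf : ∃ F : ℕ → ℕ → ℕ, Computable₂ F ∧ (∀ x, ∃ t, ∀ s ≥ t, F s x = f x) ∧
      ∀ n : ℕ, {m : ℕ | ∃ s, F s m ≤ n}.Finite) :
    ∃ h : ℕ → ℕ, (∃ G : ℕ → ℕ → ℕ, Computable₂ G ∧ ∀ x, ∃ t, ∀ s ≥ t, G s x = h x)
      ∧ (Monotone h ∧ ∀ b : ℕ, ∃ m, b < h m) ∧ ∀ n, h n ≤ f n := by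
  obtain ⟨F, hFc, hFconv, hFfin⟩ := hf
  set h : ℕ → ℕ := fun n => sInf {k | ∃ m, n ≤ m ∧ f m = k} with hh
  have hne : ∀ n, ∃ m, n ≤ m ∧ f m = f n := fun n => ⟨n, le_refl n, rfl⟩
  have hmem : ∀ n, ∃ m, n ≤ m ∧ f m = h n := fun n =>
    Nat.sInf_mem (⟨f n, hne n⟩ : {k | ∃ m, n ≤ m ∧ f m = k}.Nonempty)
  have hlef : ∀ n, h n ≤ f n := fun n => Nat.sInf_le (hne n)
  have hle : ∀ n m, n ≤ m → h n ≤ f m := fun n m hnm => Nat.sInf_le ⟨m, hnm, rfl⟩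
  have hmono : Monotone h := by
    intro n n' hnn'
    obtain ⟨m, hm, hfm⟩ := hmem n'
    exact hfm ▸ hle n m (hnn'.trans hm)
  -- stabilization stages
  have tchoice : ∀ x, ∃ t, ∀ s ≥ t, F s x = f x := hFconv
  choose tf htf using tchoice
  refine ⟨h, ⟨fun s n => GG F s n s, GG_computable hFc, ?_⟩, ⟨hmono, ?_⟩, hlef⟩
  · -- convergence of approximation
    intro n
    obtain ⟨m0, hm0, hfm0⟩ := hmem n
    set b := h n
    set T := (hFfin b).toFinset with hT
    refine ⟨m0 + T.sup tf + tf m0, fun s hs => ?_⟩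
    have hs1 : m0 ≤ s := le_trans (by omega) hs
    have hs2 : tf m0 ≤ s := le_trans (by omega) hs
    have hsT : ∀ m ∈ T, tf m ≤ s := fun m hm =>
      le_trans (le_trans (Finset.le_sup hm) (by omega)) hs
    have key : GG F s n s ≤ b := by
      have := GG_le F s n s (m0 - n) (by omega)
      rwa [show n + (m0 - n) = m0 by omega, htf m0 s hs2, hfm0] at this
    obtain ⟨i, hi, hGG⟩ := GG_mem F s n s
    have hFi : F s (n + i) ≤ b := hGG ▸ key
    have hmemT : (n + i) ∈ T := (hFfin b).mem_toFinset.mpr ⟨s, hFi⟩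
    have hfi : F s (n + i) = f (n + i) := htf _ s (hsT _ hmemT)
    have hb : b ≤ f (n + i) := Nat.sInf_le ⟨n + i, Nat.le_add_right n i, rfl⟩
    show GG F s n s = b
    omega
  · -- unbounded
    intro b
    set T := (hFfin b).toFinset with hT
    refine ⟨T.sup id + 1, ?_⟩
    obtain ⟨m, hm, hfm⟩ := hmem (T.sup id + 1)
    have hmT : m ∉ T := by
      intro hmem'
      have := Finset.le_sup (f := id) hmem'
      simp only [id] at this; omega
    have : ∀ s, b < F s m := by
      intro s
      by_contra hcon
      exact hmT ((hFfin b).mem_toFinset.mpr ⟨s, by omega⟩)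
    have := this (tf m)
    rw [htf m (tf m) (le_refl _)] at this
    omega


/-- every finite-to-one approximable function pointwise dominates a Δ⁰₂ order. -/
theorem stmt2 (f : ℕ → ℕ) (hf : FinToOneApprox f) :
    ∃ h : ℕ → ℕ, Delta02Fun h ∧ IsOrder h ∧ ∀ n, h n ≤ f n := by
  exact stmt2' f hf
end

section
/- There exists a Δ⁰₂ function f : ℕ → ℕ that is finite-to-one (every value has only finitely many preimages) but that has no finite-to-one approximation, i.e., f is not finite-to-one approximable. -/
open Nat.Partrec (Code)
open Nat.Partrec.Code

def cpB (e s i t : ℕ) : Bool :=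
  decide (evaln s (Denumerable.ofNat Code e) (Nat.pair t (Nat.pair e i)) = some (2 * e))

def caughtB (e s i : ℕ) : Bool :=
  cpB e s i (Nat.findGreatest (fun t => cpB e s i t = true) s)

lemma caughtB_iff {e s i : ℕ} : caughtB e s i = true ↔
    ∃ t ≤ s, evaln s (Denumerable.ofNat Code e) (Nat.pair t (Nat.pair e i)) = some (2 * e) := by
  constructor
  · intro h
    refine ⟨Nat.findGreatest (fun t => cpB e s i t = true) s, Nat.findGreatest_le s, ?_⟩
    rw [caughtB] at h
    simpa [cpB] using h
  · rintro ⟨t, hts, ht⟩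
    have hcp : cpB e s i t = true := by simpa [cpB] using ht
    exact Nat.findGreatest_spec (P := fun t => cpB e s i t = true) hts hcp

def Iup (e : ℕ) : ℕ → ℕ
  | 0 => 0
  | s + 1 => Iup e s + cond (caughtB e s (Iup e s)) 1 0

lemma Iup_mono (e : ℕ) : Monotone (Iup e) :=
  monotone_nat_of_le_succ fun s => by simp [Iup]

lemma Iup_succ_le (e s : ℕ) : Iup e (s + 1) ≤ Iup e s + 1 := by
  cases h : caughtB e s (Iup e s) <;> simp [Iup, h]

lemma Iup_step {e s : ℕ} (h : caughtB e s (Iup e s) = true) :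
    Iup e (s + 1) = Iup e s + 1 := by simp [Iup, h]

lemma Iup_reach {e i : ℕ} (h : ∃ s, i + 1 ≤ Iup e s) :
    ∃ s, Iup e s = i ∧ caughtB e s i = true := by
  classical
  have hs : i + 1 ≤ Iup e (Nat.find h) := Nat.find_spec h
  have hs0 : Nat.find h ≠ 0 := by
    intro h0
    rw [h0] at hs; simp [Iup] at hs
  obtain ⟨s', hseq⟩ := Nat.exists_eq_succ_of_ne_zero hs0
  rw [hseq] at hs
  simp only [Nat.succ_eq_add_one] at hs
  have hlt : ¬ (i + 1 ≤ Iup e s') := Nat.find_min h (by omega)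
  have h2 : Iup e (s' + 1) ≤ Iup e s' + 1 := Iup_succ_le e s'
  have hIs' : Iup e s' = i := by omega
  refine ⟨s', hIs', ?_⟩
  by_contra hc
  have hfalse : caughtB e s' (Iup e s') = false := by
    rw [hIs']; exact Bool.eq_false_iff.mpr hc
  have : Iup e (s' + 1) = Iup e s' := by simp [Iup, hfalse]
  omega

lemma Iup_evc {e : ℕ} (h : ∃ b, ∀ s, Iup e s ≤ b) :
    ∃ N L, ∀ s, N ≤ s → Iup e s = L := by
  obtain ⟨b, hb⟩ := h
  have hbdd : BddAbove (Set.range (Iup e)) := ⟨b, by rintro _ ⟨s, rfl⟩; exact hb s⟩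
  have hne : (Set.range (Iup e)).Nonempty := ⟨Iup e 0, Set.mem_range_self 0⟩
  obtain ⟨N, hN⟩ := Nat.sSup_mem hne hbdd
  refine ⟨N, sSup (Set.range (Iup e)), fun s hs => ?_⟩
  exact le_antisymm (le_csSup hbdd (Set.mem_range_self s)) (hN ▸ Iup_mono e hs)

def EvC (e i : ℕ) : Prop := ∃ N, ∀ s, N ≤ s → Iup e s = i

lemma EvC_unique {e i j : ℕ} (hi : EvC e i) (hj : EvC e j) : i = j := by
  obtain ⟨N, hN⟩ := hi; obtain ⟨M, hM⟩ := hj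
  have h1 := hN (max N M) (le_max_left _ _)
  have h2 := hM (max N M) (le_max_right _ _)
  omega

open Classical in
noncomputable def fdiag (m : ℕ) : ℕ :=
  if EvC m.unpair.1 m.unpair.2 then 2 * m.unpair.1 else 2 * m + 1

def Gdiag (s m : ℕ) : ℕ :=
  if Iup m.unpair.1 s = m.unpair.2 then 2 * m.unpair.1 else 2 * m + 1

lemma cpB_primrec : Primrec fun x : (ℕ × ℕ × ℕ) × ℕ => cpB x.1.1 x.1.2.1 x.1.2.2 x.2 := by
  have h1 : Primrec fun x : (ℕ × ℕ × ℕ) × ℕ =>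
      evaln x.1.2.1 (Denumerable.ofNat Code x.1.1) (Nat.pair x.2 (Nat.pair x.1.1 x.1.2.2)) :=
    primrec_evaln.comp
      (Primrec.pair
        (Primrec.pair (Primrec.fst.comp (Primrec.snd.comp Primrec.fst))
          ((Primrec.ofNat Code).comp (Primrec.fst.comp Primrec.fst)))
        (Primrec₂.natPair.comp Primrec.snd
          (Primrec₂.natPair.comp (Primrec.fst.comp Primrec.fst)
            (Primrec.snd.comp (Primrec.snd.comp Primrec.fst)))))
  have h2 : Primrec fun x : (ℕ × ℕ × ℕ) × ℕ => (some (2 * x.1.1) : Option ℕ) :=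
    Primrec.option_some.comp
      (Primrec.nat_mul.comp (Primrec.const 2) (Primrec.fst.comp Primrec.fst))
  exact (Primrec.eq.comp h1 h2).decide

lemma caughtB_primrec : Primrec fun x : ℕ × ℕ × ℕ => caughtB x.1 x.2.1 x.2.2 := by
  have hp : PrimrecRel fun (x : ℕ × ℕ × ℕ) (t : ℕ) => cpB x.1 x.2.1 x.2.2 t = true := by
    have : Primrec₂ fun (x : ℕ × ℕ × ℕ) (t : ℕ) => cpB x.1 x.2.1 x.2.2 t := cpB_primrec
    exact Primrec₂.primrecRel (this.of_eq fun x t => by simp)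
  have hfind : Primrec fun x : ℕ × ℕ × ℕ =>
      Nat.findGreatest (fun t => cpB x.1 x.2.1 x.2.2 t = true) x.2.1 :=
    Primrec.nat_findGreatest (Primrec.fst.comp Primrec.snd) hp
  exact cpB_primrec.comp (Primrec.pair Primrec.id hfind)

lemma Iup_primrec : Primrec₂ Iup := by
  have hg : Primrec₂ fun (a : ℕ) (p : ℕ × ℕ) => p.2 + cond (caughtB a p.1 p.2) 1 0 := by
    have hc : Primrec fun x : ℕ × (ℕ × ℕ) => caughtB x.1 x.2.1 x.2.2 :=
      caughtB_primrec.comp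
        (Primrec.pair Primrec.fst
          (Primrec.pair (Primrec.fst.comp Primrec.snd) (Primrec.snd.comp Primrec.snd)))
    exact (Primrec.nat_add.comp (Primrec.snd.comp Primrec.snd)
      (Primrec.cond hc (Primrec.const 1) (Primrec.const 0))).to₂
  have := Primrec.nat_rec (f := fun _ : ℕ => 0)
    (g := fun (a : ℕ) (p : ℕ × ℕ) => p.2 + cond (caughtB a p.1 p.2) 1 0)
    (Primrec.const 0) hg
  refine this.of_eq fun e s => ?_
  induction s with
  | zero => rfl
  | succ s ih => simp [Iup, ← ih]

lemma Gdiag_primrec : Primrec₂ Gdiag := by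
  have hcond : PrimrecPred fun p : ℕ × ℕ => Iup p.2.unpair.1 p.1 = p.2.unpair.2 :=
    Primrec.eq.comp
      (Iup_primrec.comp (Primrec.fst.comp (Primrec.unpair.comp Primrec.snd)) Primrec.fst)
      (Primrec.snd.comp (Primrec.unpair.comp Primrec.snd))
  exact (Primrec.ite hcond
    (Primrec.nat_mul.comp (Primrec.const 2)
      (Primrec.fst.comp (Primrec.unpair.comp Primrec.snd)))
    (Primrec.succ.comp (Primrec.nat_mul.comp (Primrec.const 2) Primrec.snd)))

lemma Gdiag_lim (m : ℕ) : ∃ t, ∀ s ≥ t, Gdiag s m = fdiag m := by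
  classical
  set e := m.unpair.1 with he
  set i := m.unpair.2 with hi
  by_cases hub : ∀ b, ∃ s, b ≤ Iup e s
  · -- unbounded: eventually Iup e s > i
    obtain ⟨N, hN⟩ := hub (i + 1)
    have hfd : fdiag m = 2 * m + 1 := by
      rw [fdiag, if_neg]
      intro hEvC
      obtain ⟨M, hM⟩ := hEvC
      have h1 := hM (max N M) (le_max_right _ _)
      have h2 : i + 1 ≤ Iup e (max N M) := le_trans hN (Iup_mono e (le_max_left _ _))
      rw [← he, ← hi] at h1
      omega
    refine ⟨N, fun s hs => ?_⟩
    have h2 : i + 1 ≤ Iup e s := le_trans hN (Iup_mono e hs)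
    rw [Gdiag, if_neg (by rw [← he, ← hi]; omega), hfd]
  · push_neg at hub
    obtain ⟨b, hb⟩ := hub
    obtain ⟨N, L, hNL⟩ := Iup_evc ⟨b, fun s => le_of_lt (hb s)⟩
    by_cases hLi : L = i
    · subst hLi
      have hEvC : EvC e i := ⟨N, hNL⟩
      have hfd : fdiag m = 2 * e := by rw [fdiag, if_pos]; exact hEvC
      refine ⟨N, fun s hs => ?_⟩
      rw [Gdiag, if_pos (by rw [← he, ← hi]; exact hNL s hs), hfd]
    · have hfd : fdiag m = 2 * m + 1 := by
        rw [fdiag, if_neg]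
        intro hEvC
        exact hLi (EvC_unique ⟨N, hNL⟩ hEvC)
      refine ⟨N, fun s hs => ?_⟩
      rw [Gdiag, if_neg (by rw [← he, ← hi, hNL s hs]; exact hLi), hfd]

lemma fdiag_injective : Function.Injective fdiag := by
  classical
  intro m₁ m₂ h
  unfold fdiag at h
  split_ifs at h with h1 h2 h2
  · have he : m₁.unpair.1 = m₂.unpair.1 := by omega
    have hii : m₁.unpair.2 = m₂.unpair.2 := EvC_unique (he ▸ h1) h2
    have := congrArg (fun p : ℕ × ℕ => Nat.pair p.1 p.2)
      (Prod.ext he hii : m₁.unpair = m₂.unpair)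
    simpa [Nat.pair_unpair] using this
  · omega
  · omega
  · omega

/-- there is a Δ⁰₂ finite-to-one function that is not finite-to-one approximable. -/
theorem stmt3 :
    ∃ f : ℕ → ℕ, Delta02Fun f ∧ (∀ n : ℕ, {m : ℕ | f m = n}.Finite) ∧
      ¬ FinToOneApprox f := by
  classical
  refine ⟨fdiag, ⟨Gdiag, Gdiag_primrec.to_comp, Gdiag_lim⟩, ?_, ?_⟩
  · intro n
    apply Set.Subsingleton.finite
    intro m₁ hm₁ m₂ hm₂
    exact fdiag_injective (hm₁.trans hm₂.symm)
  · rintro ⟨F, hFcomp, hFlim, hFfin⟩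
    -- get a code for the uncurried F
    have hF1 : Computable fun n : ℕ => F n.unpair.1 n.unpair.2 :=
      hFcomp.comp (Computable.fst.comp Primrec.unpair.to_comp)
        (Computable.snd.comp Primrec.unpair.to_comp)
    have hF2 : Nat.Partrec fun n : ℕ => Part.some (F n.unpair.1 n.unpair.2) :=
      Partrec.nat_iff.mp hF1
    obtain ⟨c, hc⟩ := exists_code.mp hF2
    set e := Encodable.encode c with hec
    have hcode : Denumerable.ofNat Code e = c := Denumerable.ofNat_encode c
    by_cases hub : ∀ b, ∃ s, b ≤ Iup e s
    · -- unbounded case: S_{2e} is infinite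
      have hinf : {m : ℕ | ∃ s, F s m ≤ 2 * e}.Infinite := by
        apply Set.infinite_of_injective_forall_mem (f := fun i : ℕ => Nat.pair e i)
        · intro i j hij
          have := congrArg (fun n => n.unpair.2) hij
          simpa using this
        · intro i
          obtain ⟨s, hIs, hcaught⟩ := Iup_reach (hub (i + 1))
          obtain ⟨t, hts, hev⟩ := caughtB_iff.mp hcaught
          rw [hcode] at hev
          have h2 : (2 * e) ∈ eval c (Nat.pair t (Nat.pair e i)) :=
            evaln_sound (Option.mem_def.mpr hev)
          rw [hc] at h2
          simp only [Nat.unpair_pair, Part.mem_some_iff] at h2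
          exact ⟨t, h2.ge⟩
      exact absurd hinf (hFfin (2 * e)).not_infinite
    · push_neg at hub
      obtain ⟨b, hb⟩ := hub
      obtain ⟨N, L, hNL⟩ := Iup_evc ⟨b, fun s => le_of_lt (hb s)⟩
      have hEvC : EvC e L := ⟨N, hNL⟩
      have hfval : fdiag (Nat.pair e L) = 2 * e := by
        rw [fdiag, if_pos] <;> simp [Nat.unpair_pair, hEvC]
      obtain ⟨t, ht⟩ := hFlim (Nat.pair e L)
      have hFt : F t (Nat.pair e L) = 2 * e := by rw [ht t le_rfl, hfval]
      have hev : (2 * e) ∈ eval c (Nat.pair t (Nat.pair e L)) := by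
        rw [hc]
        simp [Nat.unpair_pair, hFt]
      obtain ⟨k, hk⟩ := evaln_complete.mp hev
      set s := max N (max k t) with hsdef
      have hk' : (2 * e) ∈ evaln s c (Nat.pair t (Nat.pair e L)) :=
        evaln_mono (le_trans (le_max_left k t) (le_max_right N _)) hk
      have hcaught : caughtB e s L = true := by
        rw [caughtB_iff]
        refine ⟨t, le_trans (le_max_right k t) (le_max_right N _), ?_⟩
        rw [hcode]
        exact Option.mem_def.mp hk'
      have hIs : Iup e s = L := hNL s (le_max_left _ _)
      have hstep : Iup e (s + 1) = L + 1 := by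
        rw [← hIs]; exact Iup_step (hIs ▸ hcaught)
      have : Iup e (s + 1) = L := hNL (s + 1) (le_trans (le_max_left _ _) (Nat.le_succ s))
      omega
end

section
/- A real A ∈ 2^ω belongs to KT(Δ⁰₂) if and only if A ∈ KT(f) for every finite-to-one approximable function f : ℕ → ℕ; likewise A belongs to LK(Δ⁰₂) if and only if A ∈ LK(f) for every function f : 2^{<ω} → ℕ of the form f(σ) = g(|σ|) with g finite-to-one approximable. -/
namespace Stmt4Aux

/-! ### Facts about `strNum` -/

private def stepFn : ℕ → Bool → ℕ := fun n b => 2 * n + (if b then 2 else 1)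

lemma strNum_foldl (σ : BinStr) : ∀ n : ℕ,
    σ.foldl stepFn n = n * 2 ^ σ.length + strNum σ := by
  induction σ with
  | nil => intro n; simp [strNum]
  | cons b σ ih =>
    intro n
    have h1 : strNum (b :: σ) = (if b then 2 else 1) * 2 ^ σ.length + strNum σ := by
      show List.foldl stepFn (stepFn 0 b) σ = _
      have : stepFn 0 b = (if b then 2 else 1) := by simp [stepFn]
      rw [this, ih]
    show List.foldl stepFn (stepFn n b) σ = n * 2 ^ (σ.length + 1) + strNum (b :: σ)
    rw [ih, h1]
    have : stepFn n b = 2 * n + (if b then 2 else 1) := rfl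
    rw [this]
    ring

lemma strNum_cons (b : Bool) (σ : BinStr) :
    strNum (b :: σ) = (if b then 2 else 1) * 2 ^ σ.length + strNum σ := by
  show List.foldl stepFn (stepFn 0 b) σ = _
  have : stepFn 0 b = (if b then 2 else 1) := by simp [stepFn]
  rw [this, strNum_foldl]

lemma strNum_lb (σ : BinStr) : 2 ^ σ.length ≤ strNum σ + 1 := by
  induction σ with
  | nil => simp [strNum]
  | cons b σ ih =>
    rw [strNum_cons]
    have hp : 2 ^ ((b :: σ).length) = 2 * 2 ^ σ.length := by
      simp [List.length_cons]; ring
    cases b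
    · rw [if_neg (by simp)]; omega
    · rw [if_pos rfl]; omega

lemma strNum_ub (σ : BinStr) : strNum σ + 2 ≤ 2 ^ (σ.length + 1) := by
  induction σ with
  | nil => simp [strNum]
  | cons b σ ih =>
    rw [strNum_cons]
    have hp : 2 ^ ((b :: σ).length + 1) = 2 * 2 ^ (σ.length + 1) := by
      simp [List.length_cons]; ring
    have hp2 : (2:ℕ) ^ (σ.length + 1) = 2 * 2 ^ σ.length := by ring
    cases b
    · rw [if_neg (by simp)]; omega
    · rw [if_pos rfl]; omega

lemma strNum_replicate (m : ℕ) : strNum (List.replicate m false) + 1 = 2 ^ m := by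
  induction m with
  | zero => simp [strNum]
  | succ m ih =>
    rw [List.replicate_succ, strNum_cons]
    simp only [Bool.false_eq_true, if_false, List.length_replicate]
    have hp : (2:ℕ) ^ (m + 1) = 2 * 2 ^ m := by ring
    omega

lemma length_le_of_strNum_le {σ τ : BinStr} (h : strNum σ ≤ strNum τ) :
    σ.length ≤ τ.length := by
  have h1 := strNum_lb σ
  have h2 := strNum_ub τ
  have : 2 ^ σ.length < 2 ^ (τ.length + 1) := by omega
  have := (Nat.pow_lt_pow_iff_right (a := 2) (by norm_num)).1 this
  omega

lemma strNum_repl_le (σ : BinStr) :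
    strNum (List.replicate σ.length false) ≤ strNum σ := by
  have h1 := strNum_replicate σ.length
  have h2 := strNum_lb σ
  omega

lemma le_strNum_repl_succ (σ : BinStr) :
    strNum σ ≤ strNum (List.replicate (σ.length + 1) false) := by
  have h1 := strNum_replicate (σ.length + 1)
  have h2 := strNum_ub σ
  omega

/-! ### Max/min over windows, with computability -/

def maxUpTo (G : ℕ → ℕ → ℕ) (s m : ℕ) : ℕ :=
  Nat.rec (G s 0) (fun n ih => max ih (G s (n + 1))) m

lemma maxUpTo_computable {G : ℕ → ℕ → ℕ} (hG : Computable₂ G) :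
    Computable₂ (maxUpTo G) := by
  have h : Computable fun a : ℕ × ℕ =>
      Nat.rec (motive := fun _ => ℕ) (G a.1 0)
        (fun y IH => (fun (a : ℕ × ℕ) (p : ℕ × ℕ) => max p.2 (G a.1 (p.1 + 1))) a (y, IH)) a.2 :=
    Computable.nat_rec Computable.snd (hG.comp Computable.fst (Computable.const 0))
      ((Primrec.nat_max.to_comp).comp (Computable.snd.comp Computable.snd)
        (hG.comp (Computable.fst.comp Computable.fst)
          (Computable.succ.comp (Computable.fst.comp Computable.snd)))).to₂
  exact h.of_eq fun a => rfl

lemma le_maxUpTo (G : ℕ → ℕ → ℕ) (s : ℕ) : ∀ m y, y ≤ m → G s y ≤ maxUpTo G s m := by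
  intro m
  induction m with
  | zero => intro y hy; interval_cases y; exact le_refl _
  | succ m ih =>
    intro y hy
    rcases Nat.lt_or_ge y (m + 1) with h | h
    · exact (ih y (Nat.lt_succ_iff.1 h)).trans (le_max_left _ _)
    · have : y = m + 1 := le_antisymm hy h
      subst this
      exact le_max_right _ _

lemma maxUpTo_eq (G : ℕ → ℕ → ℕ) (s : ℕ) {g : ℕ → ℕ} (hmono : Monotone g) :
    ∀ m, (∀ y ≤ m, G s y = g y) → maxUpTo G s m = g m := by
  intro m
  induction m with
  | zero => intro h; exact h 0 le_rfl
  | succ m ih =>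
    intro h
    show max (maxUpTo G s m) (G s (m + 1)) = g (m + 1)
    rw [ih (fun y hy => h y (hy.trans (Nat.le_succ m))), h (m + 1) le_rfl]
    exact max_eq_right (hmono (Nat.le_succ m))

def minWinAux (F : ℕ → ℕ → ℕ) (s m k : ℕ) : ℕ :=
  Nat.rec (F s m) (fun i ih => min ih (F s (m + i + 1))) k

lemma minWin_computable {F : ℕ → ℕ → ℕ} (hF : Computable₂ F) :
    Computable₂ (fun s m => minWinAux F s m s) := by
  have h : Computable fun a : ℕ × ℕ =>
      Nat.rec (motive := fun _ => ℕ) (F a.1 a.2)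
        (fun y IH => (fun (a : ℕ × ℕ) (p : ℕ × ℕ) => min p.2 (F a.1 (a.2 + p.1 + 1))) a (y, IH))
        a.1 :=
    Computable.nat_rec Computable.fst hF
      ((Primrec.nat_min.to_comp).comp (Computable.snd.comp Computable.snd)
        (hF.comp (Computable.fst.comp Computable.fst)
          (Computable.succ.comp ((Primrec.nat_add.to_comp).comp
            (Computable.snd.comp Computable.fst)
            (Computable.fst.comp Computable.snd))))).to₂
  exact h.of_eq fun a => rfl

lemma minWinAux_le (F : ℕ → ℕ → ℕ) (s m : ℕ) : ∀ k i, i ≤ k →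
    minWinAux F s m k ≤ F s (m + i) := by
  intro k
  induction k with
  | zero => intro i hi; interval_cases i; exact le_refl _
  | succ k ih =>
    intro i hi
    rcases Nat.lt_or_ge i (k + 1) with h | h
    · exact (min_le_left _ _).trans (ih i (Nat.lt_succ_iff.1 h))
    · have : i = k + 1 := le_antisymm hi h
      subst this
      have : minWinAux F s m (k + 1) ≤ F s (m + k + 1) := min_le_right _ _
      simpa [Nat.add_assoc] using this

lemma le_minWinAux (F : ℕ → ℕ → ℕ) (s m v : ℕ) : ∀ k, (∀ i ≤ k, v ≤ F s (m + i)) →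
    v ≤ minWinAux F s m k := by
  intro k
  induction k with
  | zero => intro h; exact h 0 le_rfl
  | succ k ih =>
    intro h
    refine le_min (ih fun i hi => h i (hi.trans (Nat.le_succ k))) ?_
    have := h (k + 1) le_rfl
    simpa [Nat.add_assoc] using this

/-! ### Every Δ⁰₂ order is finite-to-one approximable -/

theorem finToOne_of_order {g : ℕ → ℕ} (hΔ : Delta02Fun g) (hord : IsOrder g) :
    FinToOneApprox g := by
  obtain ⟨G, hGc, hGlim⟩ := hΔ
  choose T hT using hGlim
  refine ⟨fun s m => if s < m then m else maxUpTo G s m, ?_, ?_, ?_⟩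
  · -- computability
    have hc : Computable fun p : ℕ × ℕ => decide (p.1 < p.2) :=
      (Primrec.nat_lt.comp Primrec.fst Primrec.snd).decide.to_comp
    have h := Computable.cond hc Computable.snd
      ((maxUpTo_computable hGc).comp Computable.fst Computable.snd)
    exact h.of_eq fun p => by by_cases hp : p.1 < p.2 <;> simp [hp]
  · -- limit
    intro m
    refine ⟨max m ((Finset.range (m + 1)).sup T), fun s hs => ?_⟩
    have hsm : ¬ s < m := not_lt.2 ((le_max_left _ _).trans hs)
    show (if s < m then m else maxUpTo G s m) = g m
    rw [if_neg hsm]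
    refine maxUpTo_eq G s hord.1 m fun y hy => hT y s ?_
    calc T y ≤ (Finset.range (m + 1)).sup T :=
          Finset.le_sup (Finset.mem_range.2 (Nat.lt_succ_iff.2 hy))
      _ ≤ s := (le_max_right _ _).trans hs
  · -- finite-to-one
    intro n
    obtain ⟨y0, hy0⟩ := hord.2 n
    set N := max n (max y0 (T y0)) + 1 with hN
    refine (Set.finite_Iio N).subset ?_
    intro m hm
    simp only [Set.mem_setOf_eq] at hm
    obtain ⟨s, hs⟩ := hm
    by_contra hcon
    have hmN : N ≤ m := not_lt.1 (by simpa [Set.mem_Iio] using hcon)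
    rcases Nat.lt_or_ge s m with h | h
    · rw [if_pos h] at hs; omega
    · rw [if_neg (not_lt.2 h)] at hs
      have hsT : T y0 ≤ s := by omega
      have h1 : G s y0 = g y0 := hT y0 s hsT
      have h2 : G s y0 ≤ maxUpTo G s m := le_maxUpTo G s m y0 (by omega)
      omega

/-! ### Every finite-to-one approximable function dominates a Δ⁰₂ order -/

theorem order_of_finToOne {f : ℕ → ℕ} (hf : FinToOneApprox f) :
    ∃ g : ℕ → ℕ, Delta02Fun g ∧ IsOrder g ∧ ∀ m, g m ≤ f m := by
  obtain ⟨F, hFc, hFlim, hFfin⟩ := hf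
  choose T hT using hFlim
  set g : ℕ → ℕ := fun m => sInf (f '' Set.Ici m) with hgdef
  have hne : ∀ m : ℕ, (f '' Set.Ici m).Nonempty := fun m => ⟨f m, m, Set.mem_Ici.mpr le_rfl, rfl⟩
  have hmem : ∀ m, g m ∈ f '' Set.Ici m := fun m => Nat.sInf_mem (hne m)
  have hglb : ∀ m y, m ≤ y → g m ≤ f y := fun m y h => Nat.sInf_le ⟨y, Set.mem_Ici.mpr h, rfl⟩
  have hmono : Monotone g := by
    intro m m' hmm'
    obtain ⟨y, hy, hfy⟩ := hmem m'
    rw [← hfy]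
    exact hglb m y (hmm'.trans hy)
  refine ⟨g, ?_, ⟨hmono, ?_⟩, fun m => hglb m m le_rfl⟩
  · -- Δ⁰₂
    refine ⟨fun s m => minWinAux F s m s, minWin_computable hFc, ?_⟩
    intro m
    obtain ⟨y0, hy0m, hfy0⟩ := hmem m
    have hfin := hFfin (g m)
    set t := max y0 (max (T y0) (hfin.toFinset.sup T)) with ht
    refine ⟨t, fun s hs => ?_⟩
    have hy0s : y0 ≤ s := (le_max_left _ _).trans hs
    have hTy0 : T y0 ≤ s := ((le_max_left _ _).trans (le_max_right _ _)).trans hs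
    apply le_antisymm
    · have h1 : minWinAux F s m s ≤ F s (m + (y0 - m)) :=
        minWinAux_le F s m s (y0 - m) (by omega)
      rw [Nat.add_sub_cancel' hy0m] at h1
      rw [hT y0 s hTy0, hfy0] at h1
      exact h1
    · refine le_minWinAux F s m (g m) s fun i _ => ?_
      by_cases hmi : ∃ s', F s' (m + i) ≤ g m
      · have hTmi : T (m + i) ≤ s := by
          have : T (m + i) ≤ hfin.toFinset.sup T :=
            Finset.le_sup (hfin.mem_toFinset.mpr hmi)
          have h2 : hfin.toFinset.sup T ≤ s :=
            ((le_max_right _ _).trans (le_max_right _ _)).trans hs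
          omega
        rw [hT (m + i) s hTmi]
        exact hglb m (m + i) (Nat.le_add_right m i)
      · push_neg at hmi
        exact (hmi s).le
  · -- unbounded
    intro b
    have hfin := hFfin b
    obtain ⟨N, hN⟩ := hfin.bddAbove
    refine ⟨N + 1, ?_⟩
    obtain ⟨y, hy, hfy⟩ := hmem (N + 1)
    rw [← hfy]
    by_contra hcon
    push_neg at hcon
    have : y ∈ {m : ℕ | ∃ s, F s m ≤ b} := ⟨T y, by rw [hT y (T y) le_rfl]; exact hcon⟩
    have h3 := hN this
    have h4 : N + 1 ≤ y := hy
    omega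

lemma replicate_computable : Computable (fun m : ℕ => List.replicate m false) := by
  have h : Computable fun m : ℕ =>
      Nat.rec (motive := fun _ => List Bool) ([] : List Bool)
        (fun y IH => (fun (_ : ℕ) (p : ℕ × List Bool) => false :: p.2) m (y, IH)) m :=
    Computable.nat_rec Computable.id (Computable.const ([] : List Bool))
      ((Primrec.list_cons.to_comp).comp (Computable.const false)
        (Computable.snd.comp Computable.snd)).to₂
  refine h.of_eq fun m => ?_
  induction m with
  | zero => rfl
  | succ m ih => rw [List.replicate_succ]; exact congrArg (false :: ·) ih

end Stmt4Aux

open Stmt4Aux in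

/-- KT(Δ⁰₂) (resp. LK(Δ⁰₂)) coincides with being K-trivial (resp. low for K)
up to every finite-to-one approximable function. -/
theorem stmt4 (U : UniversalPrefixMachine) (A : Seq2) :
    (KTDelta U A ↔ ∀ f : ℕ → ℕ, FinToOneApprox f → KT U f A) ∧
    (LKDelta U A ↔ ∀ g : ℕ → ℕ, FinToOneApprox g → LK U (fun σ => g σ.length) A) := by
  constructor
  · constructor
    · intro h f hf
      obtain ⟨g, hΔ, hord, hle⟩ := order_of_finToOne hf
      obtain ⟨c, hc⟩ := h g hΔ hord
      exact ⟨c, fun n => (hc n).trans (by have := hle n; omega)⟩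
    · intro h g hΔ hord
      exact h g (finToOne_of_order hΔ hord)
  · constructor
    · intro h g hf
      obtain ⟨g', hΔ, hord, hle⟩ := order_of_finToOne hf
      have hΔf : Delta02StrFun (fun σ => g' σ.length) := by
        obtain ⟨G', hG'c, hG'lim⟩ := hΔ
        exact ⟨fun s σ => G' s σ.length,
          hG'c.comp Computable.fst ((Primrec.list_length.to_comp).comp Computable.snd),
          fun σ => hG'lim σ.length⟩
      have hordf : IsStrOrder (fun σ => g' σ.length) := by
        constructor
        · intro σ τ hστ
          exact hord.1 (length_le_of_strNum_le hστ)
        · intro b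
          obtain ⟨m, hm⟩ := hord.2 b
          exact ⟨List.replicate m false, by simpa using hm⟩
      obtain ⟨c, hc⟩ := h _ hΔf hordf
      exact ⟨c, fun σ => (hc σ).trans
        (Nat.add_le_add_right (Nat.add_le_add_left (hle σ.length) _) c)⟩
    · intro h f hΔf hordf
      set g : ℕ → ℕ := fun m => f (List.replicate m false) with hgdef
      have hΔ : Delta02Fun g := by
        obtain ⟨F, hFc, hFlim⟩ := hΔf
        exact ⟨fun s m => F s (List.replicate m false),
          hFc.comp Computable.fst (replicate_computable.comp Computable.snd),
          fun m => hFlim (List.replicate m false)⟩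
      have hord : IsOrder g := by
        constructor
        · intro m m' hmm'
          refine hordf.1 _ _ ?_
          have h1 := strNum_replicate m
          have h2 := strNum_replicate m'
          have : (2:ℕ) ^ m ≤ 2 ^ m' := Nat.pow_le_pow_right (by norm_num) hmm'
          omega
        · intro b
          obtain ⟨σ, hσ⟩ := hordf.2 b
          refine ⟨σ.length + 1, lt_of_lt_of_le hσ ?_⟩
          exact hordf.1 _ _ (le_strNum_repl_succ σ)
      obtain ⟨c, hc⟩ := h g (finToOne_of_order hΔ hord)
      refine ⟨c, fun σ => (hc σ).trans ?_⟩
      have hgf : g σ.length ≤ f σ :=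
        hordf.1 (List.replicate σ.length false) σ (strNum_repl_le σ)
      exact Nat.add_le_add_right (Nat.add_le_add_left hgf _) c
end

section
/- For any real B ∈ 2^ω there is a real A ∈ 2^ω with B ≤_T A (A computes B) such that A ∈ KT(Δ⁰₂); consequently KT(Δ⁰₂) is cofinal in the Turing degrees. -/
namespace Stmt5
open Nat.Partrec (Code)
open Nat.Partrec.Code

/-- value of the last converging `F t`, `t < N`, default 0. -/
def lastVal (F : ℕ → Option ℕ) : ℕ → ℕ
  | 0 => 0
  | t + 1 => (F t).getD (lastVal F t)

theorem lastVal_eq {F : ℕ → Option ℕ} {N v t₀ : ℕ} (ht : t₀ < N) (hs : (F t₀).isSome)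
    (hv : ∀ t, t₀ ≤ t → ∀ w, F t = some w → w = v) : lastVal F N = v := by
  induction N with
  | zero => omega
  | succ N ih =>
    rcases h : F N with _ | w
    · have htN : t₀ ≠ N := by intro he; rw [he, h] at hs; simp at hs
      have : lastVal F N = v := ih (by omega)
      simpa [lastVal, h]
    · have : w = v := hv N (by omega) w h
      simp [lastVal, h, this]

/-- the uniform `Δ⁰₂`-approximation: `Happrox e s x` is the stage-`s` guess at
the limit of the `e`-th approximation procedure on input `x`. -/
def Happrox (e s x : ℕ) : ℕ :=
  lastVal (fun t => evaln s (Denumerable.ofNat Code e) (Nat.pair t x)) (s + 1)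

/-- `e` codes a convergent approximation on input `x`. -/
def HasLim (e x : ℕ) : Prop := ∃ t, ∀ s, t ≤ s → Happrox e s x = Happrox e t x

open Classical in
noncomputable def Settle (e x : ℕ) : ℕ := if h : HasLim e x then Nat.find h else 0

noncomputable def Dlim (e x : ℕ) : ℕ := Happrox e (Settle e x) x

open Classical in
theorem settle_spec {e x : ℕ} (h : HasLim e x) :
    ∀ s, Settle e x ≤ s → Happrox e s x = Dlim e x := by
  intro s hs
  rw [Dlim]
  simp only [Settle, dif_pos h] at hs ⊢
  exact Nat.find_spec h s hs

theorem dlim_eq {e x S v : ℕ} (h : HasLim e x) (hS : ∀ s, S ≤ s → Happrox e s x = v) :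
    Dlim e x = v := by
  have h1 := settle_spec h (max S (Settle e x)) (le_max_right _ _)
  have h2 := hS (max S (Settle e x)) (le_max_left _ _)
  omega

/-- length of the maximal run `[n-d, n]` on which the approximation agrees with stage `n`. -/
def runAux (e n x : ℕ) : ℕ → ℕ
  | 0 => 0
  | d + 1 =>
    if runAux e n x d = d ∧ Happrox e (n - (d + 1)) x = Happrox e n x then d + 1
    else runAux e n x d

theorem runAux_le (e n x d : ℕ) : runAux e n x d ≤ d := by
  induction d with
  | zero => simp [runAux]
  | succ d ih => rw [runAux]; split <;> omega

theorem runAux_prop (e n x d : ℕ) : ∀ s, n - runAux e n x d ≤ s → s ≤ n →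
    Happrox e s x = Happrox e n x := by
  induction d with
  | zero =>
    intro s h1 h2
    simp only [runAux, Nat.sub_zero] at h1
    have : s = n := le_antisymm h2 h1
    rw [this]
  | succ d ih =>
    intro s h1 h2
    by_cases hc : runAux e n x d = d ∧ Happrox e (n - (d + 1)) x = Happrox e n x
    · rw [runAux, if_pos hc] at h1
      rcases Nat.eq_or_lt_of_le h1 with he | hlt
      · rw [← he]; exact hc.2
      · exact ih s (by omega) h2
    · rw [runAux, if_neg hc] at h1
      exact ih s h1 h2

theorem runAux_max (e n x d : ℕ) (h : runAux e n x d < d) :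
    Happrox e (n - runAux e n x d - 1) x ≠ Happrox e n x := by
  induction d with
  | zero => omega
  | succ d ih =>
    by_cases hc : runAux e n x d = d ∧ Happrox e (n - (d + 1)) x = Happrox e n x
    · rw [runAux, if_pos hc] at h; omega
    · rw [runAux, if_neg hc] at h ⊢
      rcases Nat.lt_or_ge (runAux e n x d) d with hlt | hge
      · exact ih hlt
      · have he : runAux e n x d = d := le_antisymm (runAux_le e n x d) hge
        have hne : ¬ Happrox e (n - (d + 1)) x = Happrox e n x := fun hh => hc ⟨he, hh⟩
        rw [he]
        simpa [Nat.sub_sub] using hne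

def appSettle (n e x : ℕ) : ℕ := n - runAux e n x n

theorem appSettle_le (n e x : ℕ) : appSettle n e x ≤ n := Nat.sub_le _ _

theorem happrox_settled {e x : ℕ} (h : HasLim e x) {n : ℕ} (hn : Settle e x ≤ n) :
    Happrox e n x = Dlim e x := settle_spec h n hn

open Classical in
theorem appSettle_eq {e x : ℕ} (h : HasLim e x) {n : ℕ} (hn : Settle e x ≤ n) :
    appSettle n e x = Settle e x := by
  have hA : ∀ s, Settle e x ≤ s → s ≤ n → Happrox e s x = Happrox e n x := by
    intro s h1 _
    rw [settle_spec h s h1, settle_spec h n hn]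
  set σ := Settle e x with hσ
  set r := runAux e n x n with hr
  have hrn : r ≤ n := runAux_le e n x n
  have h1 : n - σ ≤ r := by
    by_contra hcon
    push_neg at hcon
    have := runAux_max e n x n (by omega)
    exact this (hA (n - r - 1) (by omega) (by omega))
  have h2 : r ≤ n - σ := by
    by_contra hcon
    push_neg at hcon
    have hσpos : 1 ≤ σ := by omega
    have hprop := runAux_prop e n x n (σ - 1) (by omega) (by omega)
    have hmin : ¬ ∀ s, σ - 1 ≤ s → Happrox e s x = Happrox e (σ - 1) x := by
      have h2' : σ = Nat.find h := by simp only [hσ, Settle, dif_pos h]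
      have := Nat.find_min h (m := σ - 1) (by omega)
      exact this
    push_neg at hmin
    obtain ⟨s₀, hs₀, hne⟩ := hmin
    have hDn : Happrox e (σ - 1) x = Dlim e x := by
      rw [hprop]; exact settle_spec h n hn
    rcases Nat.eq_or_lt_of_le hs₀ with he | hlt
    · exact hne (by rw [← he])
    · have : σ ≤ s₀ := by omega
      rw [settle_spec h s₀ this, hDn] at hne
      exact hne rfl
  have hreq : r = n - σ := le_antisymm h2 h1
  rw [appSettle, ← hr, hreq]
  omega


/-! ### The decoder -/

def dTerm (n : ℕ) (fl : List Bool) (e x : ℕ) : ℕ :=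
  if fl.getD e false then Happrox e n x + appSettle n e x else 0

def sup2 (F : ℕ → ℕ → ℕ) (k : ℕ) : ℕ :=
  ((List.range k).map fun e => ((List.range k).map (F e)).foldr max 0).foldr max 0

theorem le_foldr_max {l : List ℕ} {a : ℕ} (h : a ∈ l) : a ≤ l.foldr max 0 := by
  induction l with
  | nil => simp at h
  | cons b l ih =>
    rcases List.mem_cons.1 h with rfl | h
    · exact le_max_left _ _
    · exact le_trans (ih h) (le_max_right _ _)

theorem le_sup2 {F : ℕ → ℕ → ℕ} {k e x : ℕ} (he : e < k) (hx : x < k) : F e x ≤ sup2 F k := by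
  have h1 : F e x ∈ (List.range k).map (F e) := List.mem_map_of_mem (List.mem_range.2 hx)
  have h2 : ((List.range k).map (F e)).foldr max 0 ∈
      (List.range k).map fun e => ((List.range k).map (F e)).foldr max 0 :=
    List.mem_map_of_mem (List.mem_range.2 he)
  exact le_trans (le_foldr_max h1) (le_foldr_max h2)

theorem sup2_congr {F G : ℕ → ℕ → ℕ} {k : ℕ} (h : ∀ e < k, ∀ x < k, F e x = G e x) :
    sup2 F k = sup2 G k := by
  unfold sup2
  congr 1
  refine List.map_congr_left fun e hel => ?_
  congr 1
  refine List.map_congr_left fun x hxl => ?_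
  exact h e (List.mem_range.1 hel) x (List.mem_range.1 hxl)

def declen (l : List Bool) : ℕ := (l.length - 1) / 2

def dPos (n : ℕ) (l : List Bool) : ℕ → ℕ
  | 0 => 0
  | i + 1 => 2 * (1 + max (dPos n l i) (sup2 (dTerm n l) (i + 2)))
      + (if l.getD (declen l + 1 + i) false then 1 else 0)

def memFold (x : ℕ) (l : List ℕ) : Bool := l.foldr (fun a acc => (decide (a = x)) || acc) false

theorem memFold_iff {x : ℕ} {l : List ℕ} : memFold x l = true ↔ x ∈ l := by
  induction l with
  | nil => simp [memFold]
  | cons b l ih =>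
    simp [memFold, List.foldr] at ih ⊢
    constructor
    · rintro (h | h)
      · exact Or.inl (by omega)
      · exact Or.inr (ih.1 h)
    · rintro (h | h)
      · exact Or.inl (by omega)
      · exact Or.inr (ih.2 h)

def DecStr (n : ℕ) (l : List Bool) : List Bool :=
  (List.range n).map fun x =>
    memFold x ((List.range (declen l)).map fun i => dPos n l (i + 1))

/-! ### The coding sequence -/

def GoodE (e : ℕ) : Prop := ∀ x, HasLim e x

open Classical in
noncomputable def cTerm (e x : ℕ) : ℕ := if GoodE e then Dlim e x + Settle e x else 0

noncomputable def pos (B : Seq2) : ℕ → ℕ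
  | 0 => 0
  | i + 1 => 2 * (1 + max (pos B i) (sup2 cTerm (i + 2))) + (if B i then 1 else 0)

open Classical in
noncomputable def flagsL (j : ℕ) : List Bool := (List.range (j + 1)).map fun e => decide (GoodE e)

noncomputable def betasL (B : Seq2) (j : ℕ) : List Bool := (List.range j).map fun i => B i

noncomputable def payload (B : Seq2) (j : ℕ) : List Bool := flagsL j ++ betasL B j

theorem flagsL_length (j : ℕ) : (flagsL j).length = j + 1 := by simp [flagsL]

theorem betasL_length (B : Seq2) (j : ℕ) : (betasL B j).length = j := by simp [betasL]

theorem payload_length (B : Seq2) (j : ℕ) : (payload B j).length = 2 * j + 1 := by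
  simp [payload, flagsL, betasL]; omega

theorem declen_payload (B : Seq2) (j : ℕ) : declen (payload B j) = j := by
  rw [declen, payload_length]; omega

theorem getD_map_range {α : Type*} {f : ℕ → α} {k i : ℕ} {d : α} (h : i < k) :
    (((List.range k).map f).getD i d) = f i := by
  rw [List.getD_eq_getElem?_getD]
  simp [List.getElem?_map, List.getElem?_range h]

theorem pos_lt_succ (B : Seq2) (i : ℕ) : pos B i < pos B (i + 1) := by
  rw [pos]
  have := le_max_left (pos B i) (sup2 cTerm (i + 2))
  omega

theorem pos_strictMono (B : Seq2) : StrictMono (pos B) :=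
  strictMono_nat_of_lt_succ (pos_lt_succ B)

theorem le_pos (B : Seq2) (i : ℕ) : i ≤ pos B i := (pos_strictMono B).le_apply

theorem cterm_lt_pos (B : Seq2) {j e x : ℕ} (hj : 1 ≤ j) (he : e ≤ j) (hx : x ≤ j) :
    cTerm e x < pos B j := by
  obtain ⟨j', rfl⟩ : ∃ j', j = j' + 1 := ⟨j - 1, by omega⟩
  have h1 : cTerm e x ≤ sup2 cTerm (j' + 2) := le_sup2 (by omega) (by omega)
  rw [pos]
  have := le_max_right (pos B j') (sup2 cTerm (j' + 2))
  omega

open Classical in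
theorem dPos_eq (B : Seq2) {n j : ℕ} (hj : j = 0 ∨ pos B j < n) :
    ∀ i, i ≤ j → dPos n (payload B j) i = pos B i := by
  intro i hi
  induction i with
  | zero => rw [dPos, pos]
  | succ i ih =>
    have hj1 : 1 ≤ j := by omega
    have hjn : pos B j < n := hj.resolve_left (by omega)
    rw [dPos, pos, ih (by omega)]
    have hsup : sup2 (dTerm n (payload B j)) (i + 2) = sup2 cTerm (i + 2) := by
      refine sup2_congr fun e hel x hxl => ?_
      have hfl : (payload B j).getD e false = decide (GoodE e) := by
        rw [payload, List.getD_append _ _ _ _ (by rw [flagsL_length]; omega)]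
        exact getD_map_range (by omega)
      by_cases hg : GoodE e
      · have hlim : HasLim e x := hg x
        have hset : Settle e x ≤ n := by
          have := cterm_lt_pos B hj1 (show e ≤ j by omega) (show x ≤ j by omega)
          rw [cTerm, if_pos hg] at this
          omega
        rw [dTerm, hfl, if_pos (by simpa using hg), cTerm, if_pos hg,
          happrox_settled hlim hset, appSettle_eq hlim hset]
      · rw [dTerm, hfl, if_neg (by simpa using hg), cTerm, if_neg hg]
    rw [hsup]
    have hb : (payload B j).getD (declen (payload B j) + 1 + i) false = B i := by
      rw [declen_payload, payload,
        List.getD_append_right _ _ _ _ (by rw [flagsL_length]; omega)]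
      rw [flagsL_length]
      have hidx : j + 1 + i - (j + 1) = i := by omega
      rw [hidx, betasL]
      exact getD_map_range (by omega)
    rw [hb]

/-! ### the sequence `A` and counting of ones -/

open Classical in
noncomputable def Aseq (B : Seq2) : Seq2 := fun x => decide (∃ i, 1 ≤ i ∧ pos B i = x)

noncomputable def level (B : Seq2) (n : ℕ) : ℕ :=
  ((List.range n).filter fun x => Aseq B x).length

theorem level_key (B : Seq2) : ∀ n,
    ((List.range n).filter fun x => Aseq B x) =
      ((List.range (level B n)).map fun i => pos B (i + 1)) ∧
    (∀ i, 1 ≤ i → (pos B i < n ↔ i ≤ level B n)) := by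
  intro n
  induction n with
  | zero =>
    refine ⟨by simp [level], fun i hi => ?_⟩
    simp [level]
    omega
  | succ n ih =>
    obtain ⟨ih1, ih2⟩ := ih
    have hlev : level B (n + 1) =
        level B n + (if Aseq B n then 1 else 0) := by
      unfold level
      rw [List.range_succ, List.filter_append]
      simp [List.filter]
      cases h : Aseq B n <;> simp [h]
    by_cases hA : Aseq B n = true
    · obtain ⟨i₀, hi₀1, hi₀⟩ : ∃ i, 1 ≤ i ∧ pos B i = n := by
        simpa [Aseq] using hA
      have hi₀eq : i₀ = level B n + 1 := by
        have hle : ¬ pos B i₀ < n := by omega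
        have h1 : ¬ i₀ ≤ level B n := fun hc => hle ((ih2 i₀ hi₀1).2 hc)
        have h2 : i₀ ≤ level B n + 1 := by
          by_contra hc
          push_neg at hc
          have : 1 ≤ i₀ - 1 := by omega
          have := (ih2 (i₀ - 1) this).1 (by
            have := pos_strictMono B (show i₀ - 1 < i₀ by omega)
            omega)
          omega
        omega
      have hlev1 : level B (n + 1) = level B n + 1 := by rw [hlev, if_pos hA]
      constructor
      · rw [List.range_succ, List.filter_append, ih1, hlev1, List.range_succ,
          List.map_append]
        simp only [List.filter_cons, List.filter_nil, hA, List.map_cons, List.map_nil]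
        rw [← hi₀eq, hi₀]
        simp
      · intro i hi
        rw [hlev1]
        constructor
        · intro h
          rcases Nat.lt_or_ge (pos B i) n with h' | h'
          · exact le_trans ((ih2 i hi).1 h') (by omega)
          · have : pos B i = n := by omega
            have : i = i₀ := (pos_strictMono B).injective (by omega)
            omega
        · intro h
          rcases Nat.lt_or_ge i i₀ with h' | h'
          · have := pos_strictMono B h'
            omega
          · have : i = i₀ := by omega
            subst this
            omega
    · have hA' : Aseq B n = false := by
        cases h : Aseq B n
        · rfl
        · exact absurd h hA
      have hnone : ∀ i, 1 ≤ i → pos B i ≠ n := by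
        intro i h1 hc
        exact hA (by simp [Aseq]; exact ⟨i, h1, hc⟩)
      have hlev0 : level B (n + 1) = level B n := by rw [hlev, hA']; simp
      constructor
      · rw [List.range_succ, List.filter_append, ih1, hlev0]
        simp [hA']
      · intro i hi
        rw [hlev0, ← ih2 i hi]
        have := hnone i hi
        omega

theorem pos_level_lt (B : Seq2) {n : ℕ} (h : 1 ≤ level B n) : pos B (level B n) < n :=
  ((level_key B n).2 (level B n) h).2 le_rfl

theorem DecStr_eq (B : Seq2) (n : ℕ) : DecStr n (payload B (level B n)) = restrict (Aseq B) n := by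
  set j := level B n with hj
  have hcase : j = 0 ∨ pos B j < n := by
    rcases Nat.eq_zero_or_pos j with h | h
    · exact Or.inl h
    · exact Or.inr (pos_level_lt B h)
  unfold DecStr restrict
  refine List.map_congr_left fun x hx => ?_
  have hx' : x < n := List.mem_range.1 hx
  rw [declen_payload]
  have hmap : ((List.range j).map fun i =>
      dPos n (payload B j) (i + 1)) = (List.range j).map fun i => pos B (i + 1) :=
    List.map_congr_left fun i hil =>
      dPos_eq B hcase (i + 1) (by have := List.mem_range.1 hil; omega)
  rw [hmap]
  rcases h : Aseq B x with _ | _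
  · -- A x = false : x is not a position
    have hnot : ∀ i, 1 ≤ i → pos B i ≠ x := by
      intro i h1 hc
      have : Aseq B x = true := by simp [Aseq]; exact ⟨i, h1, hc⟩
      rw [h] at this; exact Bool.noConfusion this
    rcases hmem : memFold x ((List.range j).map fun i => pos B (i + 1)) with _ | _
    · rfl
    · exfalso
      obtain ⟨i, _, hie⟩ := List.mem_map.1 (memFold_iff.1 hmem)
      exact hnot (i + 1) (by omega) hie
  · -- A x = true
    obtain ⟨i, hi1, hie⟩ : ∃ i, 1 ≤ i ∧ pos B i = x := by simpa [Aseq] using h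
    have hlt : pos B i < n := by omega
    have hij : i ≤ j := ((level_key B n).2 i hi1).1 hlt
    have : x ∈ ((List.range j).map fun i => pos B (i + 1)) := by
      refine List.mem_map.2 ⟨i - 1, List.mem_range.2 (by omega), ?_⟩
      have : i - 1 + 1 = i := by omega
      rw [this, hie]
    rw [memFold_iff.2 this]

/-! ### self-delimiting encoding -/

def encBits (l : List Bool) : List Bool := (l.flatMap fun b => [true, b]) ++ [false]

theorem encBits_cons (b : Bool) (l : List Bool) :
    encBits (b :: l) = true :: b :: encBits l := by
  simp [encBits]

theorem encBits_length (l : List Bool) : (encBits l).length = 2 * l.length + 1 := by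
  induction l with
  | nil => simp [encBits]
  | cons b l ih => rw [encBits_cons]; simp at ih ⊢; omega

theorem encBits_prefix : ∀ {l₁ l₂ : List Bool}, encBits l₁ <+: encBits l₂ → l₁ = l₂ := by
  intro l₁
  induction l₁ with
  | nil =>
    intro l₂ h
    cases l₂ with
    | nil => rfl
    | cons b t =>
      exfalso
      rw [encBits_cons] at h
      obtain ⟨r, hr⟩ := h
      simp only [encBits, List.flatMap_nil, List.nil_append, List.cons_append] at hr
      injection hr with h1 h2
      exact Bool.noConfusion h1
  | cons b t ih =>
    intro l₂ h
    cases l₂ with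
    | nil =>
      exfalso
      rw [encBits_cons] at h
      obtain ⟨r, hr⟩ := h
      simp only [encBits, List.flatMap_nil, List.nil_append, List.cons_append] at hr
      injection hr with h1 h2
      exact Bool.noConfusion h1.symm
    | cons b' t' =>
      rw [encBits_cons, encBits_cons] at h
      rw [List.cons_prefix_cons] at h
      obtain ⟨-, h⟩ := h
      rw [List.cons_prefix_cons] at h
      obtain ⟨rfl, h⟩ := h
      rw [ih h]


section PrimrecProofs
open Primrec

theorem lastVal_rec (F : ℕ → Option ℕ) (N : ℕ) :
    lastVal F N = Nat.rec 0 (fun t acc => (F t).getD acc) N := by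
  induction N with
  | zero => rfl
  | succ N ih => rw [lastVal, ih]

theorem happrox_primrec : Primrec fun a : ℕ × ℕ × ℕ => Happrox a.1 a.2.1 a.2.2 := by
  have hstep : Primrec₂ fun (a : ℕ × ℕ × ℕ) (p : ℕ × ℕ) =>
      (evaln a.2.1 (Denumerable.ofNat Code a.1) (Nat.pair p.1 a.2.2)).getD p.2 := by
    have harg : Primrec fun q : (ℕ × ℕ × ℕ) × ℕ × ℕ =>
        ((q.1.2.1, Denumerable.ofNat Code q.1.1), Nat.pair q.2.1 q.1.2.2) := by
      refine Primrec.pair (Primrec.pair ?_ ?_) ?_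
      · exact fst.comp (snd.comp fst)
      · exact (Primrec.ofNat Code).comp (fst.comp fst)
      · exact Primrec₂.natPair.comp (fst.comp snd) (snd.comp (snd.comp fst))
    have hev : Primrec fun q : (ℕ × ℕ × ℕ) × ℕ × ℕ =>
        evaln q.1.2.1 (Denumerable.ofNat Code q.1.1) (Nat.pair q.2.1 q.1.2.2) :=
      primrec_evaln.comp harg
    exact (option_getD.comp hev (snd.comp snd)).to₂
  have := Primrec.nat_rec' (f := fun a : ℕ × ℕ × ℕ => a.2.1 + 1)
    (g := fun _ : ℕ × ℕ × ℕ => (0 : ℕ))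
    (succ.comp (fst.comp snd)) (const 0) hstep
  refine this.of_eq fun a => ?_
  rw [Happrox, lastVal_rec]

theorem runAux_rec (e n x d : ℕ) : runAux e n x d =
    Nat.rec 0 (fun d acc =>
      if acc = d ∧ Happrox e (n - (d + 1)) x = Happrox e n x then d + 1 else acc) d := by
  induction d with
  | zero => rfl
  | succ d ih => rw [runAux, ih]

theorem appSettle_primrec : Primrec fun a : ℕ × ℕ × ℕ => appSettle a.1 a.2.1 a.2.2 := by
  have hH := happrox_primrec
  have h1 : Primrec fun q : (ℕ × ℕ × ℕ) × ℕ × ℕ =>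
      Happrox q.1.2.1 (q.1.1 - (q.2.1 + 1)) q.1.2.2 :=
    hH.comp (Primrec.pair (fst.comp (snd.comp fst))
      (Primrec.pair (nat_sub.comp (fst.comp fst) (succ.comp (fst.comp snd)))
        (snd.comp (snd.comp fst))))
  have h2 : Primrec fun q : (ℕ × ℕ × ℕ) × ℕ × ℕ =>
      Happrox q.1.2.1 q.1.1 q.1.2.2 :=
    hH.comp (Primrec.pair (fst.comp (snd.comp fst))
      (Primrec.pair (fst.comp fst) (snd.comp (snd.comp fst))))
  have hc : PrimrecPred fun q : (ℕ × ℕ × ℕ) × ℕ × ℕ =>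
      q.2.2 = q.2.1 ∧ Happrox q.1.2.1 (q.1.1 - (q.2.1 + 1)) q.1.2.2 =
        Happrox q.1.2.1 q.1.1 q.1.2.2 :=
    PrimrecPred.and (Primrec.eq.comp (snd.comp snd) (fst.comp snd))
      (Primrec.eq.comp h1 h2)
  have hstep : Primrec₂ fun (a : ℕ × ℕ × ℕ) (p : ℕ × ℕ) =>
      if p.2 = p.1 ∧ Happrox a.2.1 (a.1 - (p.1 + 1)) a.2.2 = Happrox a.2.1 a.1 a.2.2
      then p.1 + 1 else p.2 :=
    (Primrec.ite hc (succ.comp (fst.comp snd)) (snd.comp snd)).to₂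
  have hrun : Primrec fun a : ℕ × ℕ × ℕ =>
      Nat.rec (motive := fun _ => ℕ) 0 (fun d acc =>
        if acc = d ∧ Happrox a.2.1 (a.1 - (d + 1)) a.2.2 = Happrox a.2.1 a.1 a.2.2
        then d + 1 else acc) a.1 :=
    Primrec.nat_rec' Primrec.fst (const 0) hstep
  refine (nat_sub.comp Primrec.fst hrun).of_eq fun a => ?_
  rw [appSettle, runAux_rec]

theorem dterm_primrec : Primrec fun a : (ℕ × List Bool) × ℕ × ℕ =>
    dTerm a.1.1 a.1.2 a.2.1 a.2.2 := by
  have hb : Primrec fun a : (ℕ × List Bool) × ℕ × ℕ => a.1.2.getD a.2.1 false :=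
    (list_getD false).comp (snd.comp fst) (fst.comp snd)
  have hv : Primrec fun a : (ℕ × List Bool) × ℕ × ℕ =>
      Happrox a.2.1 a.1.1 a.2.2 + appSettle a.1.1 a.2.1 a.2.2 :=
    nat_add.comp
      (happrox_primrec.comp (Primrec.pair (fst.comp snd)
        (Primrec.pair (fst.comp fst) (snd.comp snd))))
      (appSettle_primrec.comp (Primrec.pair (fst.comp fst)
        (Primrec.pair (fst.comp snd) (snd.comp snd))))
  have := Primrec.cond hb hv (const 0)
  refine this.of_eq fun a => ?_
  rw [dTerm]
  cases h : a.1.2.getD a.2.1 false <;> simp [h]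

theorem foldrmax_primrec : Primrec fun l : List ℕ => l.foldr max 0 :=
  Primrec.list_foldr Primrec.id (const 0)
    ((nat_max.comp (fst.comp snd) (snd.comp snd)).to₂)

theorem sup2_dterm_primrec : Primrec fun a : (ℕ × List Bool) × ℕ =>
    sup2 (dTerm a.1.1 a.1.2) a.2 := by
  have hinner : Primrec₂ fun (a : (ℕ × List Bool) × ℕ) (e : ℕ) =>
      ((List.range a.2).map (dTerm a.1.1 a.1.2 e)).foldr max 0 := by
    have hmap : Primrec fun q : ((ℕ × List Bool) × ℕ) × ℕ =>
        (List.range q.1.2).map (dTerm q.1.1.1 q.1.1.2 q.2) :=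
      Primrec.list_map (list_range.comp (snd.comp fst))
        ((dterm_primrec.comp (Primrec.pair (fst.comp (fst.comp fst))
          (Primrec.pair (snd.comp fst) Primrec.snd))).to₂)
    exact (foldrmax_primrec.comp hmap).to₂
  have houter : Primrec fun a : (ℕ × List Bool) × ℕ =>
      (List.range a.2).map fun e => ((List.range a.2).map (dTerm a.1.1 a.1.2 e)).foldr max 0 :=
    Primrec.list_map (list_range.comp snd) hinner
  exact (foldrmax_primrec.comp houter).of_eq fun a => rfl

theorem dpos_rec (n : ℕ) (l : List Bool) (i : ℕ) : dPos n l i =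
    Nat.rec 0 (fun i acc => 2 * (1 + max acc (sup2 (dTerm n l) (i + 2)))
      + (if l.getD (declen l + 1 + i) false then 1 else 0)) i := by
  induction i with
  | zero => rfl
  | succ i ih => rw [dPos, ih]

theorem dpos_primrec : Primrec fun a : (ℕ × List Bool) × ℕ =>
    dPos a.1.1 a.1.2 a.2 := by
  have hsup : Primrec fun q : ((ℕ × List Bool) × ℕ) × ℕ × ℕ =>
      sup2 (dTerm q.1.1.1 q.1.1.2) (q.2.1 + 2) :=
    sup2_dterm_primrec.comp (Primrec.pair (fst.comp fst)
      (nat_add.comp (fst.comp snd) (const 2)))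
  have hbit : Primrec fun q : ((ℕ × List Bool) × ℕ) × ℕ × ℕ =>
      (if q.1.1.2.getD (declen q.1.1.2 + 1 + q.2.1) false then 1 else 0 : ℕ) := by
    have hl : Primrec fun q : ((ℕ × List Bool) × ℕ) × ℕ × ℕ => q.1.1.2 :=
      snd.comp (fst.comp fst)
    have hdl : Primrec fun q : ((ℕ × List Bool) × ℕ) × ℕ × ℕ =>
        declen q.1.1.2 + 1 + q.2.1 := by
      have : Primrec (declen : List Bool → ℕ) :=
        nat_div.comp (nat_sub.comp list_length (const 1)) (const 2)
      exact nat_add.comp (nat_add.comp (this.comp hl) (const 1)) (fst.comp snd)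
    have hg := (list_getD false).comp hl hdl
    have := Primrec.cond hg (const (1 : ℕ)) (const (0 : ℕ))
    refine this.of_eq fun q => ?_
    cases h : q.1.1.2.getD (declen q.1.1.2 + 1 + q.2.1) false <;> simp [h]
  have hstep : Primrec₂ fun (a : (ℕ × List Bool) × ℕ) (p : ℕ × ℕ) =>
      2 * (1 + max p.2 (sup2 (dTerm a.1.1 a.1.2) (p.1 + 2)))
        + (if a.1.2.getD (declen a.1.2 + 1 + p.1) false then 1 else 0 : ℕ) :=
    (nat_add.comp
      (nat_mul.comp (const 2)
        (nat_add.comp (const 1) (nat_max.comp (snd.comp snd) hsup)))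
      hbit).to₂
  have := Primrec.nat_rec' (f := fun a : (ℕ × List Bool) × ℕ => a.2)
    (g := fun _ : (ℕ × List Bool) × ℕ => (0 : ℕ)) Primrec.snd (const 0) hstep
  refine this.of_eq fun a => ?_
  rw [dpos_rec]

theorem memFold_primrec : Primrec₂ memFold := by
  have h0 := Primrec.list_foldr (f := fun a : ℕ × List ℕ => a.2)
    (g := fun _ : ℕ × List ℕ => false)
    (h := fun (a : ℕ × List ℕ) (p : ℕ × Bool) => (decide (p.1 = a.1)) || p.2)
    Primrec.snd (const false)
    (((dom_bool₂ (· || ·)).comp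
      (Primrec.eq.comp (fst.comp snd) (fst.comp fst)).decide (snd.comp snd)).to₂)
  have h1 : Primrec fun a : ℕ × List ℕ => memFold a.1 a.2 := h0.of_eq fun a => rfl
  exact h1.to₂

theorem decstr_primrec : Primrec₂ DecStr := by
  have hinner : Primrec fun a : ℕ × List Bool =>
      (List.range (declen a.2)).map fun i => dPos a.1 a.2 (i + 1) := by
    have hdl : Primrec (declen : List Bool → ℕ) :=
      nat_div.comp (nat_sub.comp list_length (const 1)) (const 2)
    exact Primrec.list_map (list_range.comp (hdl.comp snd))
      ((dpos_primrec.comp (Primrec.pair fst (succ.comp snd))).to₂)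
  have houter : Primrec fun a : ℕ × List Bool =>
      (List.range a.1).map fun x =>
        memFold x ((List.range (declen a.2)).map fun i => dPos a.1 a.2 (i + 1)) :=
    Primrec.list_map (list_range.comp fst)
      ((memFold_primrec.comp Primrec.snd (hinner.comp Primrec.fst)).to₂)
  have h1 : Primrec fun a : ℕ × List Bool => DecStr a.1 a.2 := houter.of_eq fun a => rfl
  exact h1.to₂

theorem encBits_primrec : Primrec encBits := by
  have h1 : Primrec fun l : List Bool => l.flatMap fun b => [true, b] :=
    Primrec.list_flatMap Primrec.id ((dom_bool fun b => [true, b]).comp snd).to₂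
  exact list_append.comp h1 (const [false])

theorem replicate_primrec : Primrec fun k : ℕ => List.replicate k false := by
  have h1 : Primrec fun k : ℕ => (List.range k).map fun _ => false :=
    Primrec.list_map list_range ((const false).to₂)
  refine h1.of_eq fun k => ?_
  rw [List.eq_replicate_iff]
  constructor
  · simp
  · intro b hb
    simp at hb
    exact hb.2

theorem machAssembly {ax : ℕ → Option (BinStr × BinStr × BinStr)} (hax : Computable ax) :
    Computable fun s : ℕ =>
      (Encodable.decode (α := List Bool) (Nat.unpair s).2).bind fun l =>
        (ax (Nat.unpair s).1).bind fun z =>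
          if z.1 = List.replicate z.1.length false ∧
              z.2.2 = List.replicate z.2.2.length false then
            some (([] : BinStr), z.2.1 ++ encBits l, DecStr z.2.2.length l)
          else none := by
  have hdec : Computable fun s : ℕ => Encodable.decode (α := List Bool) (Nat.unpair s).2 :=
    Computable.decode.comp (snd.comp Primrec.unpair).to_comp
  have hF : Primrec fun q : (ℕ × List Bool) × BinStr × BinStr × BinStr =>
      (if q.2.1 = List.replicate q.2.1.length false ∧
          q.2.2.2 = List.replicate q.2.2.2.length false then
        some (([] : BinStr), q.2.2.1 ++ encBits q.1.2, DecStr q.2.2.2.length q.1.2)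
      else none : Option (BinStr × BinStr × BinStr)) := by
    have hz1 : Primrec fun q : (ℕ × List Bool) × BinStr × BinStr × BinStr => q.2.1 :=
      fst.comp snd
    have hz22 : Primrec fun q : (ℕ × List Bool) × BinStr × BinStr × BinStr => q.2.2.2 :=
      snd.comp (snd.comp snd)
    have hcond : PrimrecPred fun q : (ℕ × List Bool) × BinStr × BinStr × BinStr =>
        q.2.1 = List.replicate q.2.1.length false ∧
          q.2.2.2 = List.replicate q.2.2.2.length false :=
      PrimrecPred.and
        (Primrec.eq.comp hz1 (replicate_primrec.comp (list_length.comp hz1)))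
        (Primrec.eq.comp hz22 (replicate_primrec.comp (list_length.comp hz22)))
    have hval : Primrec fun q : (ℕ × List Bool) × BinStr × BinStr × BinStr =>
        (([] : BinStr), q.2.2.1 ++ encBits q.1.2, DecStr q.2.2.2.length q.1.2) :=
      (const ([] : BinStr)).pair
        ((list_append.comp (fst.comp (snd.comp snd))
          (encBits_primrec.comp (snd.comp fst))).pair
          (decstr_primrec.comp (list_length.comp hz22) (snd.comp fst)))
    exact Primrec.ite hcond (option_some.comp hval) (const none)
  have hmid : Computable₂ fun (p : ℕ) (l : List Bool) =>
      (ax (Nat.unpair p).1).bind fun z =>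
        if z.1 = List.replicate z.1.length false ∧
            z.2.2 = List.replicate z.2.2.length false then
          some (([] : BinStr), z.2.1 ++ encBits l, DecStr z.2.2.length l)
        else none := by
    have haxc : Computable fun p : ℕ × List Bool => ax (Nat.unpair p.1).1 :=
      hax.comp ((fst.comp (Primrec.unpair.comp fst)).to_comp)
    exact (Computable.option_bind haxc (hF.to_comp.to₂)).to₂
  exact Computable.option_bind hdec hmid

end PrimrecProofs

/-! ### the compressor machine -/

def machAxiom (U : UniversalPrefixMachine) (s : ℕ) : Option (BinStr × BinStr × BinStr) :=
  (Encodable.decode (α := List Bool) (Nat.unpair s).2).bind fun l =>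
    (U.toPrefixOracleMachine.axioms (Nat.unpair s).1).bind fun z =>
      if z.1 = List.replicate z.1.length false ∧ z.2.2 = List.replicate z.2.2.length false then
        some ([], z.2.1 ++ encBits l, DecStr z.2.2.length l)
      else none

theorem machAxiom_inv {U : UniversalPrefixMachine} {s : ℕ} {τ p y : BinStr}
    (h : machAxiom U s = some (τ, p, y)) :
    ∃ (l : List Bool) (σ q w : BinStr), U.toPrefixOracleMachine.axioms (Nat.unpair s).1 =
        some (σ, q, w) ∧ σ = List.replicate σ.length false ∧ w = List.replicate w.length false ∧
        τ = [] ∧ p = q ++ encBits l ∧ y = DecStr w.length l := by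
  unfold machAxiom at h
  rcases hd : Encodable.decode (α := List Bool) (Nat.unpair s).2 with _ | l
  · rw [hd] at h; simp at h
  · rw [hd] at h
    rcases ha : U.toPrefixOracleMachine.axioms (Nat.unpair s).1 with _ | ⟨σ, q, w⟩
    · rw [ha] at h; simp at h
    · rw [ha] at h
      simp only [Option.bind_some] at h
      split at h
      · rename_i hcond
        obtain ⟨h1, h2, h3⟩ : τ = [] ∧ p = q ++ encBits l ∧ y = DecStr w.length l := by
          injection h with h'
          exact ⟨(congrArg Prod.fst h').symm, (congrArg (fun z => z.2.1) h').symm,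
            (congrArg (fun z => z.2.2) h').symm⟩
        exact ⟨l, σ, q, w, rfl, hcond.1, hcond.2, h1, h2, h3⟩
      · simp at h

theorem replicate_false_comparable {l₁ l₂ : List Bool}
    (h₁ : l₁ = List.replicate l₁.length false) (h₂ : l₂ = List.replicate l₂.length false) :
    l₁ <+: l₂ ∨ l₂ <+: l₁ := by
  rcases Nat.le_total l₁.length l₂.length with h | h
  · left
    rw [h₁, h₂]
    exact ⟨List.replicate (l₂.length - l₁.length) false, by
      rw [← List.replicate_add]; congr 1; omega⟩
  · right
    rw [h₁, h₂]
    exact ⟨List.replicate (l₁.length - l₂.length) false, by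
      rw [← List.replicate_add]; congr 1; omega⟩

theorem mach_consistent (U : UniversalPrefixMachine) :
    ∀ s t τ₁ p₁ y₁ τ₂ p₂ y₂,
    machAxiom U s = some (τ₁, p₁, y₁) → machAxiom U t = some (τ₂, p₂, y₂) →
    (τ₁ <+: τ₂ ∨ τ₂ <+: τ₁) → p₁ <+: p₂ → p₁ = p₂ ∧ y₁ = y₂ := by
  intro s t τ₁ p₁ y₁ τ₂ p₂ y₂ h1 h2 _ hp
  obtain ⟨l₁, σ₁, q₁, w₁, ha₁, hσ₁, hw₁, -, hp₁, hy₁⟩ := machAxiom_inv h1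
  obtain ⟨l₂, σ₂, q₂, w₂, ha₂, hσ₂, hw₂, -, hp₂, hy₂⟩ := machAxiom_inv h2
  have hσcomp : σ₁ <+: σ₂ ∨ σ₂ <+: σ₁ := replicate_false_comparable hσ₁ hσ₂
  have hq1 : q₁ <+: p₂ := by
    rw [hp₁] at hp
    exact ((q₁.prefix_append (encBits l₁)).trans hp)
  have hq2 : q₂ <+: p₂ := hp₂ ▸ q₂.prefix_append (encBits l₂)
  have hqcomp : q₁ <+: q₂ ∨ q₂ <+: q₁ := List.prefix_or_prefix_of_prefix hq1 hq2
  have hqw : q₁ = q₂ ∧ w₁ = w₂ := by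
    rcases hqcomp with h | h
    · exact U.toPrefixOracleMachine.consistent _ _ _ _ _ _ _ _ ha₁ ha₂ hσcomp h
    · have := U.toPrefixOracleMachine.consistent _ _ _ _ _ _ _ _ ha₂ ha₁ hσcomp.symm h
      exact ⟨this.1.symm, this.2.symm⟩
  obtain ⟨hq, hw⟩ := hqw
  rw [hp₁, hp₂, hq] at hp
  have hl : l₁ = l₂ := encBits_prefix ((List.prefix_append_right_inj q₂).1 hp)
  subst hq hw hl
  exact ⟨by rw [hp₁, hp₂], by rw [hy₁, hy₂]⟩

theorem restrict_zeroSeq (k : ℕ) : restrict zeroSeq k = List.replicate k false := by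
  rw [List.eq_replicate_iff]
  constructor
  · simp [restrict]
  · intro b hb
    simp [restrict, zeroSeq] at hb
    exact hb.2

theorem mach_computable (U : UniversalPrefixMachine) : Computable (machAxiom U) :=
  (machAssembly U.toPrefixOracleMachine.axioms_computable).of_eq fun s => rfl

noncomputable def Mach (U : UniversalPrefixMachine) : PrefixOracleMachine where
  axioms := machAxiom U
  axioms_computable := mach_computable U
  consistent := mach_consistent U

theorem mach_computes (U : UniversalPrefixMachine) (B : Seq2) (n : ℕ) {q : BinStr}
    (hq : U.toPrefixOracleMachine.Computes zeroSeq q (List.replicate n false)) :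
    (Mach U).Computes zeroSeq (q ++ encBits (payload B (level B n))) (restrict (Aseq B) n) := by
  obtain ⟨t, τ, hax, k, hτ⟩ := hq
  refine ⟨Nat.pair t (Encodable.encode (payload B (level B n))), [], ?_, 0, rfl⟩
  show machAxiom U _ = _
  unfold machAxiom
  rw [Nat.unpair_pair]
  simp only [Encodable.encodek, Option.bind_some, hax]
  have hτ' : τ = List.replicate τ.length false := by
    rw [hτ, restrict_zeroSeq]; simp
  rw [if_pos ⟨hτ', by simp⟩]
  simp only [List.length_replicate]
  rw [DecStr_eq]

theorem kc_bound (U : UniversalPrefixMachine) (B : Seq2) :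
    ∃ c, ∀ n, Kc U (restrict (Aseq B) n) ≤ KcNat U n + (4 * level B n + 3) + c := by
  obtain ⟨c, hc⟩ := U.universal (Mach U)
  refine ⟨c, fun n => ?_⟩
  have hne : {m | ∃ p : BinStr, p.length = m ∧
      U.toPrefixOracleMachine.Computes zeroSeq p (List.replicate n false)}.Nonempty := by
    obtain ⟨p, hp⟩ := U.total zeroSeq (List.replicate n false)
    exact ⟨p.length, p, rfl, hp⟩
  obtain ⟨p, hplen, hpC⟩ := Nat.sInf_mem hne
  obtain ⟨q, hqC, hqlen⟩ := hc zeroSeq _ _ (mach_computes U B n hpC)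
  have hK : Kc U (restrict (Aseq B) n) ≤ q.length := Nat.sInf_le ⟨q, rfl, hqC⟩
  have hKn : KcNat U n = p.length := hplen.symm
  rw [hKn]
  have hlen : (q ++ encBits (payload B (level B n))).length =
      q.length + (4 * level B n + 3) := by
    simp [encBits_length, payload_length]
    omega
  have := hqlen
  rw [List.length_append, encBits_length, payload_length] at this
  omega

/-! ### the decoding functional -/

def ones (σ : List Bool) : List ℕ := (List.range σ.length).filter fun x => σ.getD x false

theorem ones_snoc (σ : List Bool) (b : Bool) :
    ones (σ ++ [b]) = ones σ ++ (if b then [σ.length] else []) := by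
  unfold ones
  rw [List.length_append, List.length_singleton, List.range_succ, List.filter_append]
  congr 1
  · refine List.filter_congr fun x hx => ?_
    have hx' : x < σ.length := List.mem_range.1 hx
    rw [List.getD_append _ _ _ _ hx']
  · have hgd : (σ ++ [b]).getD σ.length false = b := by
      rw [List.getD_append_right _ _ _ _ (le_refl _)]
      simp
    cases b <;> simp [hgd]

theorem ones_prefix {σ₁ σ₂ : List Bool} (h : σ₁ <+: σ₂) : ones σ₁ <+: ones σ₂ := by
  obtain ⟨t, rfl⟩ := h
  induction t using List.reverseRecOn with
  | nil =>
    rw [List.append_nil]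
  | append_singleton t b ih =>
    have hassoc : σ₁ ++ (t ++ [b]) = (σ₁ ++ t) ++ [b] := by rw [List.append_assoc]
    rw [hassoc, ones_snoc]
    exact ih.trans (List.prefix_append _ _)

theorem phi_key (σ₁ σ₂ : List Bool) (j : ℕ) (h : σ₁ <+: σ₂) (hj : j < (ones σ₁).length) :
    (ones σ₁).getD j 0 = (ones σ₂).getD j 0 := by
  obtain ⟨r, hr⟩ := ones_prefix h
  rw [← hr, List.getD_append _ _ _ _ hj]

def phiAx (s : ℕ) : Option (BinStr × ℕ × Bool) :=
  (Encodable.decode (α := List Bool × ℕ) s).bind fun q =>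
    if q.2 + 1 ≤ (ones q.1).length then
      some (q.1, q.2, decide ((ones q.1).getD q.2 0 % 2 = 1))
    else none

theorem phiAx_inv {s : ℕ} {τ : BinStr} {n : ℕ} {b : Bool} (h : phiAx s = some (τ, n, b)) :
    n + 1 ≤ (ones τ).length ∧ b = decide ((ones τ).getD n 0 % 2 = 1) := by
  unfold phiAx at h
  rcases hd : Encodable.decode (α := List Bool × ℕ) s with _ | q
  · rw [hd] at h; simp at h
  · rw [hd] at h
    simp only [Option.bind_some] at h
    split at h
    · rename_i hcond
      injection h with h'
      have h1 : τ = q.1 := (congrArg Prod.fst h').symm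
      have h2 : n = q.2 := (congrArg (fun z => z.2.1) h').symm
      have h3 : b = decide ((ones q.1).getD q.2 0 % 2 = 1) := (congrArg (fun z => z.2.2) h').symm
      subst h1 h2
      exact ⟨hcond, h3⟩
    · simp at h

theorem phi_consistent : ∀ s t τ₁ n₁ b₁ τ₂ n₂ b₂,
    phiAx s = some (τ₁, n₁, b₁) → phiAx t = some (τ₂, n₂, b₂) →
    (τ₁ <+: τ₂ ∨ τ₂ <+: τ₁) → n₁ = n₂ → b₁ = b₂ := by
  intro s t τ₁ n₁ b₁ τ₂ n₂ b₂ h1 h2 hcomp hn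
  obtain ⟨hl₁, hb₁⟩ := phiAx_inv h1
  obtain ⟨hl₂, hb₂⟩ := phiAx_inv h2
  subst hn
  rcases hcomp with h | h
  · rw [hb₁, hb₂, phi_key τ₁ τ₂ n₁ h (by omega)]
  · rw [hb₁, hb₂, phi_key τ₂ τ₁ n₁ h (by omega)]

theorem filter_eq_flatten {α : Type*} (p : α → Bool) (l : List α) :
    l.filter p = (l.map fun x => if p x then [x] else []).flatten := by
  induction l with
  | nil => rfl
  | cons a l ih =>
    rw [List.filter_cons, List.map_cons, List.flatten_cons, ← ih]
    cases h : p a <;> simp [h]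

theorem ones_primrec : Primrec ones := by
  have h1 : Primrec fun σ : List Bool => List.range σ.length :=
    Primrec.list_range.comp Primrec.list_length
  have hc : Primrec fun p : List Bool × ℕ => p.1.getD p.2 false :=
    (Primrec.list_getD false).comp Primrec.fst Primrec.snd
  have hg : Primrec₂ fun (σ : List Bool) (x : ℕ) =>
      (if σ.getD x false then [x] else [] : List ℕ) := by
    have := Primrec.cond hc
      (Primrec.list_cons.comp Primrec.snd (Primrec.const ([] : List ℕ)))
      (Primrec.const ([] : List ℕ))
    have hg' : Primrec fun p : List Bool × ℕ =>
        (if p.1.getD p.2 false then [p.2] else [] : List ℕ) :=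
      this.of_eq fun p => by cases h : p.1.getD p.2 false <;> simp [h]
    exact hg'.to₂
  have hmap := Primrec.list_map h1 hg
  exact (Primrec.list_flatten.comp hmap).of_eq fun σ => (filter_eq_flatten _ _).symm

theorem phi_computable : Computable phiAx := by
  have honesF : Primrec fun q : List Bool × ℕ => ones q.1 := ones_primrec.comp Primrec.fst
  have hcond : PrimrecPred fun q : List Bool × ℕ => q.2 + 1 ≤ (ones q.1).length :=
    Primrec.nat_le.comp (Primrec.succ.comp Primrec.snd) (Primrec.list_length.comp honesF)
  have hval : Primrec fun q : List Bool × ℕ =>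
      (q.1, q.2, decide ((ones q.1).getD q.2 0 % 2 = 1)) := by
    have hgd : Primrec fun q : List Bool × ℕ => (ones q.1).getD q.2 0 :=
      (Primrec.list_getD 0).comp honesF Primrec.snd
    have hdec : Primrec fun q : List Bool × ℕ => decide ((ones q.1).getD q.2 0 % 2 = 1) :=
      (Primrec.eq.comp (Primrec.nat_mod.comp hgd (Primrec.const 2)) (Primrec.const 1)).decide
    exact Primrec.fst.pair (Primrec.snd.pair hdec)
  have hF : Primrec fun q : List Bool × ℕ =>
      (if q.2 + 1 ≤ (ones q.1).length then
        some (q.1, q.2, decide ((ones q.1).getD q.2 0 % 2 = 1)) else none :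
          Option (BinStr × ℕ × Bool)) :=
    Primrec.ite hcond (Primrec.option_some.comp hval) (Primrec.const none)
  exact Computable.option_bind Computable.decode (hF.to_comp.comp Computable.snd).to₂

noncomputable def Phi : TuringFunctional where
  axioms := phiAx
  axioms_computable := phi_computable
  consistent := phi_consistent

theorem ones_restrict (A : Seq2) (k : ℕ) :
    ones (restrict A k) = (List.range k).filter fun x => A x := by
  unfold ones restrict
  rw [List.length_map, List.length_range]
  exact List.filter_congr fun x hx => by rw [getD_map_range (List.mem_range.1 hx)]

theorem level_pos_succ (B : Seq2) (j : ℕ) : level B (pos B (j + 1) + 1) = j + 1 := by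
  set k := pos B (j + 1) + 1 with hk
  have h1 : j + 1 ≤ level B k := ((level_key B k).2 (j + 1) (by omega)).1 (by omega)
  have h2 : level B k ≤ j + 1 := by
    by_contra hc
    push_neg at hc
    have hlev1 : 1 ≤ level B k := by omega
    have ha := pos_level_lt B hlev1
    have hb := pos_strictMono B (show j + 1 < level B k by omega)
    omega
  omega

theorem pos_parity (B : Seq2) (j : ℕ) : decide (pos B (j + 1) % 2 = 1) = B j := by
  rw [pos]
  cases h : B j <;> simp [h] <;> omega

theorem phi_computes (B : Seq2) : Phi.Computes (Aseq B) B := by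
  intro j
  set k := pos B (j + 1) + 1 with hk
  refine ⟨Encodable.encode ((restrict (Aseq B) k : List Bool), j), k, ?_⟩
  show phiAx _ = _
  unfold phiAx
  rw [Encodable.encodek]
  simp only [Option.bind_some]
  have hones : ones (restrict (Aseq B) k) =
      (List.range (j + 1)).map fun i => pos B (i + 1) := by
    rw [ones_restrict, (level_key B k).1, level_pos_succ]
  rw [hones]
  have hlen : ((List.range (j + 1)).map fun i => pos B (i + 1)).length = j + 1 := by simp
  rw [if_pos (by rw [hlen])]
  have hget : (((List.range (j + 1)).map fun i => pos B (i + 1)).getD j 0) = pos B (j + 1) :=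
    getD_map_range (by omega)
  rw [hget, pos_parity]

theorem turingLE_aseq (B : Seq2) : TuringLE B (Aseq B) := ⟨Phi, phi_computes B⟩

/-! ### coverage: every Δ⁰₂ function appears as some `Dlim e` -/

theorem happrox_code {c : Code} {g : ℕ → ℕ} (hc : eval c = fun m : ℕ => Part.some (g m))
    {x t₀ v : ℕ} (hv : ∀ t, t₀ ≤ t → g (Nat.pair t x) = v) :
    ∃ S, ∀ s, S ≤ s → Happrox (Encodable.encode c) s x = v := by
  have hev : ∀ m, g m ∈ eval c m := by intro m; rw [hc]; exact Part.mem_some _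
  obtain ⟨k₀, hk₀⟩ := evaln_complete.1 (hev (Nat.pair t₀ x))
  refine ⟨max t₀ k₀, fun s hs => ?_⟩
  unfold Happrox
  rw [Denumerable.ofNat_encode]
  refine lastVal_eq (t₀ := t₀) (by omega) ?_ ?_
  · have : g (Nat.pair t₀ x) ∈ evaln s c (Nat.pair t₀ x) :=
      evaln_mono (by omega) hk₀
    rcases hmem : evaln s c (Nat.pair t₀ x) with _ | w
    · rw [hmem] at this; simp at this
    · simp
  · intro t ht w hw
    have h1 : w ∈ eval c (Nat.pair t x) := evaln_sound (by rw [hw]; exact rfl)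
    rw [hc] at h1
    have h2 : w = g (Nat.pair t x) := by simpa using h1
    rw [h2, hv t ht]

theorem exists_goodE {f : ℕ → ℕ} (hf : Delta02Fun f) :
    ∃ e, GoodE e ∧ ∀ x, Dlim e x = f x := by
  obtain ⟨G, hG, hlim⟩ := hf
  have hcomp : Computable fun m : ℕ => G (Nat.unpair m).1 (Nat.unpair m).2 :=
    hG.comp (Computable.fst.comp Primrec.unpair.to_comp)
      (Computable.snd.comp Primrec.unpair.to_comp)
  have hpart : Nat.Partrec fun m : ℕ =>
      Part.some (G (Nat.unpair m).1 (Nat.unpair m).2) := Partrec.nat_iff.1 hcomp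
  obtain ⟨c, hc⟩ := exists_code.1 hpart
  have hsett : ∀ x, ∃ S, ∀ s, S ≤ s → Happrox (Encodable.encode c) s x = f x := by
    intro x
    obtain ⟨t₀, ht₀⟩ := hlim x
    refine happrox_code hc (t₀ := t₀) (v := f x) ?_
    intro t ht
    rw [Nat.unpair_pair]
    exact ht₀ t ht
  refine ⟨Encodable.encode c, fun x => ?_, fun x => ?_⟩
  · obtain ⟨S, hS⟩ := hsett x
    exact ⟨S, fun s hs => by rw [hS s hs, hS S (le_refl S)]⟩
  · obtain ⟨S, hS⟩ := hsett x
    exact dlim_eq (by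
      exact ⟨S, fun s hs => by rw [hS s hs, hS S (le_refl S)]⟩) hS

/-! ### approximating the inverse of an order -/

def firstAux (C : ℕ → Bool) : ℕ → Option ℕ
  | 0 => none
  | k + 1 => (firstAux C k).orElse fun _ => if C k then some k else none

theorem firstAux_none {C : ℕ → Bool} {k : ℕ} (h : ∀ n, n < k → C n = false) :
    firstAux C k = none := by
  induction k with
  | zero => rfl
  | succ k ih =>
    rw [firstAux, ih fun n hn => h n (by omega), h k (by omega)]
    rfl

theorem firstAux_eq {C : ℕ → Bool} {L k : ℕ} (hL : L < k) (h1 : C L = true)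
    (h2 : ∀ n, n < L → C n = false) : firstAux C k = some L := by
  induction k with
  | zero => omega
  | succ k ih =>
    rcases Nat.lt_or_ge L k with h | h
    · rw [firstAux, ih h]; rfl
    · have hLk : L = k := by omega
      subst hLk
      rw [firstAux, firstAux_none h2, h1]
      rfl

def tApprox (G : ℕ → ℕ → ℕ) (s j : ℕ) : ℕ :=
  (firstAux (fun n => decide (4 * j + 8 ≤ G s n)) (s + 1)).getD s

theorem firstAux_rec (C : ℕ → Bool) (k : ℕ) :
    firstAux C k =
      Nat.rec none (fun m acc => acc.orElse fun _ => if C m then some m else none) k := by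
  induction k with
  | zero => rfl
  | succ k ih => rw [firstAux, ih]

theorem tApprox_computable {G : ℕ → ℕ → ℕ} (hG : Computable₂ G) :
    Computable₂ (tApprox G) := by
  have harg : Computable fun a : (ℕ × ℕ) × ℕ × Option ℕ => 4 * a.1.2 + 8 :=
    (Primrec.nat_add.comp
      (Primrec.nat_mul.comp (Primrec.const 4) (Primrec.snd.comp Primrec.fst))
      (Primrec.const 8)).to_comp
  have hGv : Computable fun a : (ℕ × ℕ) × ℕ × Option ℕ => G a.1.1 a.2.1 :=
    hG.comp (Computable.fst.comp Computable.fst) (Computable.fst.comp Computable.snd)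
  have hcond : Computable fun a : (ℕ × ℕ) × ℕ × Option ℕ =>
      decide (4 * a.1.2 + 8 ≤ G a.1.1 a.2.1) :=
    ((PrimrecRel.decide Primrec.nat_le).to_comp).comp harg hGv
  have hbranch : Computable fun a : (ℕ × ℕ) × ℕ × Option ℕ =>
      (if 4 * a.1.2 + 8 ≤ G a.1.1 a.2.1 then some a.2.1 else none : Option ℕ) := by
    have := Computable.cond hcond
      (Computable.option_some.comp (Computable.fst.comp Computable.snd))
      (Computable.const (none : Option ℕ))
    refine this.of_eq fun a => ?_
    by_cases h : 4 * a.1.2 + 8 ≤ G a.1.1 a.2.1 <;> simp [h]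
  have hstep : Computable₂ fun (p : ℕ × ℕ) (q : ℕ × Option ℕ) =>
      (q.2.orElse fun _ => if 4 * p.2 + 8 ≤ G p.1 q.1 then some q.1 else none : Option ℕ) := by
    have horelse : Computable₂ ((· <|> ·) : Option ℕ → Option ℕ → Option ℕ) :=
      Primrec.option_orElse.to_comp.to₂
    exact (horelse.comp (Computable.snd.comp Computable.snd) hbranch).to₂
  have hrec : Computable fun p : ℕ × ℕ =>
      Nat.rec (motive := fun _ => Option ℕ) none
        (fun m acc => acc.orElse fun _ => if 4 * p.2 + 8 ≤ G p.1 m then some m else none)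
        (p.1 + 1) := by
    have := Computable.nat_rec (f := fun p : ℕ × ℕ => p.1 + 1)
      (g := fun _ : ℕ × ℕ => (none : Option ℕ)) (h := fun (p : ℕ × ℕ) (q : ℕ × Option ℕ) =>
        (q.2.orElse fun _ => if 4 * p.2 + 8 ≤ G p.1 q.1 then some q.1 else none : Option ℕ))
      (Computable.succ.comp Computable.fst) (Computable.const none) hstep
    exact this
  have hfin : Computable fun p : ℕ × ℕ =>
      (Nat.rec (motive := fun _ => Option ℕ) none
        (fun m acc => acc.orElse fun _ => if 4 * p.2 + 8 ≤ G p.1 m then some m else none)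
        (p.1 + 1)).getD p.1 :=
    Primrec.option_getD.to_comp.to₂.comp hrec Computable.fst
  refine hfin.of_eq fun p => ?_
  rw [tApprox, firstAux_rec]
  congr 1
  induction p.1 + 1 with
  | zero => rfl
  | succ k ih =>
    simp only []
    rw [ih]
    congr 1
    funext u
    by_cases h : 4 * p.2 + 8 ≤ G p.1 k <;> simp [h]

theorem settle_all {G : ℕ → ℕ → ℕ} {g : ℕ → ℕ} (hlim : ∀ x, ∃ t, ∀ s, s ≥ t → G s x = g x) :
    ∀ L, ∃ S, ∀ s, S ≤ s → ∀ n, n ≤ L → G s n = g n := by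
  intro L
  induction L with
  | zero =>
    obtain ⟨t, ht⟩ := hlim 0
    exact ⟨t, fun s hs n hn => by
      have : n = 0 := by omega
      rw [this]; exact ht s hs⟩
  | succ L ih =>
    obtain ⟨S, hS⟩ := ih
    obtain ⟨t, ht⟩ := hlim (L + 1)
    refine ⟨max S t, fun s hs n hn => ?_⟩
    rcases Nat.lt_or_ge n (L + 1) with h | h
    · exact hS s (by omega) n (by omega)
    · have : n = L + 1 := by omega
      rw [this]; exact ht s (by omega)

open Classical in
theorem ktdelta_aseq (U : UniversalPrefixMachine) (B : Seq2) : KTDelta U (Aseq B) := by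
  intro g hg hord
  obtain ⟨cM, hcM⟩ := kc_bound U B
  have hex : ∀ j, ∃ n, 4 * j + 8 ≤ g n := by
    intro j
    obtain ⟨m, hm⟩ := hord.2 (4 * j + 8)
    exact ⟨m, by omega⟩
  set T : ℕ → ℕ := fun j => Nat.find (hex j) with hT
  have hTdelta : Delta02Fun T := by
    obtain ⟨G, hG, hlim⟩ := hg
    refine ⟨tApprox G, tApprox_computable hG, fun j => ?_⟩
    obtain ⟨S, hS⟩ := settle_all hlim (T j)
    refine ⟨max S (T j), fun s hs => ?_⟩
    have hs' : S ≤ s ∧ T j ≤ s := by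
      constructor <;> [exact le_trans (le_max_left _ _) hs; exact le_trans (le_max_right _ _) hs]
    unfold tApprox
    have h1 : (fun n => decide (4 * j + 8 ≤ G s n)) (T j) = true := by
      simp only [decide_eq_true_eq]
      rw [hS s hs'.1 (T j) (le_refl _)]
      exact Nat.find_spec (hex j)
    have h2 : ∀ m, m < T j → (fun n => decide (4 * j + 8 ≤ G s n)) m = false := by
      intro m hm
      simp only [decide_eq_false_iff_not]
      rw [hS s hs'.1 m (by omega)]
      exact Nat.find_min (hex j) hm
    rw [firstAux_eq (L := T j) (by omega) h1 h2]
    rfl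
  obtain ⟨e, hge, hde⟩ := exists_goodE hTdelta
  have hpos : ∀ i, e ≤ i → 1 ≤ i → T i < pos B i := by
    intro i he hi
    have h1 := cterm_lt_pos B hi he (le_refl i)
    rw [cTerm, if_pos hge, hde i] at h1
    omega
  refine ⟨cM + 4 * (max e 1) + 3, fun n => ?_⟩
  have hb := hcM n
  set j := level B n with hj
  rcases Nat.lt_or_ge j (max e 1) with hcase | hcase
  · have : 4 * j + 3 ≤ 4 * (max e 1) + 3 := by omega
    omega
  · have hj1 : 1 ≤ j := le_trans (le_max_right e 1) hcase
    have hje : e ≤ j := le_trans (le_max_left e 1) hcase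
    have hTj : T j < pos B j := hpos j hje hj1
    have hpn : pos B j < n := pos_level_lt B hj1
    have hgn : 4 * j + 8 ≤ g n := by
      have h1 : 4 * j + 8 ≤ g (T j) := Nat.find_spec (hex j)
      have h2 : g (T j) ≤ g n := hord.1 (by omega)
      omega
    omega

end Stmt5

/-- for any real B there is A ≥_T B with A ∈ KT(Δ⁰₂); KT(Δ⁰₂) is cofinal in the Turing degrees. -/
theorem stmt5 (U : UniversalPrefixMachine) (B : Seq2) :
    ∃ A : Seq2, TuringLE B A ∧ KTDelta U A :=
  ⟨Stmt5.Aseq B, Stmt5.turingLE_aseq B, Stmt5.ktdelta_aseq U B⟩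
end
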